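/- arXiv:2407.08854 — 3 statements merged into one kernel-verified Lean document; each statement's English description precedes it below -/
import Mathlib

section
/- Let G be a locally finite graph and x ~ y adjacent vertices of equal degree d. Then κ₀(x,y) = κ(x,y) − c/d for some c ∈ {0, 1, 2}. -/
open scoped Classical BigOperators

noncomputable section

namespace OllivierRicci

variable {V : Type*}

/-- A probability measure on the vertex set, given as a nonnegative function summing to 1. -/
def IsProb (μ : V → ℝ) : Prop := (∀ x, 0 ≤ μ x) ∧ HasSum μ 1

/-- A transport plan (coupling) between two measures. -/
def IsPlan (μ₁ μ₂ : V → ℝ) (π : V → V → ℝ) : Prop :=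
  (∀ x y, 0 ≤ π x y) ∧ (∀ x, HasSum (fun y => π x y) (μ₁ x)) ∧
    (∀ y, HasSum (fun x => π x y) (μ₂ y))

/-- The transport cost of a plan with respect to the shortest-path metric. -/
def cost (G : SimpleGraph V) (π : V → V → ℝ) : ℝ :=
  ∑' p : V × V, (G.dist p.1 p.2 : ℝ) * π p.1 p.2

/-- The 1-Wasserstein distance between two measures on the vertex set. -/
def W1 (G : SimpleGraph V) (μ₁ μ₂ : V → ℝ) : ℝ :=
  sInf {c : ℝ | ∃ π : V → V → ℝ, IsPlan μ₁ μ₂ π ∧ cost G π = c}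

/-- The lazy random walk measure `μ_x^α`. -/
def mu (G : SimpleGraph V) (α : ℝ) (x : V) : V → ℝ := fun z =>
  if z = x then α else if G.Adj x z then (1 - α) / ((G.neighborSet x).ncard : ℝ) else 0

/-- The `α`-Ollivier-Ricci curvature `κ_α(x,y)`. -/
def kappaAlpha (G : SimpleGraph V) (α : ℝ) (x y : V) : ℝ :=
  1 - W1 G (mu G α x) (mu G α y) / (G.dist x y : ℝ)

/-- The Lin-Lu-Yau curvature `κ(x,y) = lim_{α → 1} κ_α(x,y)/(1-α)`. -/
def kappa (G : SimpleGraph V) (x y : V) : ℝ :=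
  Filter.limUnder (nhdsWithin (1 : ℝ) (Set.Iio 1)) fun α => kappaAlpha G α x y / (1 - α)

/-- The set of common neighbors `△(x,y)`. -/
def triangleSet (G : SimpleGraph V) (x y : V) : Set V :=
  G.neighborSet x ∩ G.neighborSet y

/-- `R_x(x,y) = S₁(x) \ (△(x,y) ∪ {y})`. -/
def RxSet (G : SimpleGraph V) (x y : V) : Set V :=
  G.neighborSet x \ (triangleSet G x y ∪ {y})

/-- `R_y(x,y) = S₁(y) \ (△(x,y) ∪ {x})`. -/
def RySet (G : SimpleGraph V) (x y : V) : Set V :=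
  G.neighborSet y \ (triangleSet G x y ∪ {x})

/-- The cost `∑_{z ∈ A} d(z, φ(z))` of an assignment `φ` on the set `A`. -/
def assignCostOf (G : SimpleGraph V) (A : Set V) (φ : V → V) : ℝ :=
  ∑ᶠ z ∈ A, (G.dist z (φ z) : ℝ)

/-- The minimal cost over all assignments (bijections) between `A` and `B`. -/
def assignCost (G : SimpleGraph V) (A B : Set V) : ℝ :=
  sInf {c : ℝ | ∃ φ : V → V, Set.BijOn φ A B ∧ assignCostOf G A φ = c}

/-- `φ` is an optimal assignment between `A` and `B`. -/
def IsOptAssign (G : SimpleGraph V) (A B : Set V) (φ : V → V) : Prop :=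
  Set.BijOn φ A B ∧ assignCostOf G A φ = assignCost G A B

end OllivierRicci

namespace ORC


variable {V : Type*} (G : SimpleGraph V)

/-- matching cost of `f` on finset `P` -/
def mcost (P : Finset V) (f : V → V) : ℕ := ∑ z ∈ P, G.dist z (f z)

def mset (P Q : Finset V) : Set ℕ := {c | ∃ f : V → V, Set.BijOn f ↑P ↑Q ∧ mcost G P f = c}

/-- minimal matching cost between two finsets -/
def Cmin (P Q : Finset V) : ℕ := sInf (mset G P Q)

variable {G}

lemma bijOn_of_mapsTo_injOn {P Q : Finset V} (h : P.card = Q.card) {f : V → V}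
    (hm : ∀ a ∈ P, f a ∈ Q) (hi : Set.InjOn f ↑P) : Set.BijOn f ↑P ↑Q := by
  have himg : P.image f = Q := by
    apply Finset.eq_of_subset_of_card_le
    · intro b hb; obtain ⟨a, ha, rfl⟩ := Finset.mem_image.mp hb; exact hm a ha
    · rw [Finset.card_image_of_injOn (by simpa using hi)]; omega
  have h2 := hi.bijOn_image
  rwa [← Finset.coe_image, himg] at h2

lemma mset_nonempty {P Q : Finset V} (h : P.card = Q.card) : (mset G P Q).Nonempty := by
  let e := Finset.equivOfCardEq h
  refine ⟨_, fun v => if hv : v ∈ P then (e ⟨v, hv⟩ : V) else v, ?_, rfl⟩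
  refine bijOn_of_mapsTo_injOn h (fun a ha => ?_) (fun a ha b hb hab => ?_)
  · simp only [ha, dif_pos]; exact (e ⟨a, ha⟩).2
  · simp only [Finset.mem_coe] at ha hb
    simp only [ha, hb, dif_pos] at hab
    have := e.injective (Subtype.coe_injective hab)
    exact congrArg Subtype.val this

lemma Cmin_le {P Q : Finset V} {f : V → V} (hf : Set.BijOn f ↑P ↑Q) :
    Cmin G P Q ≤ mcost G P f := Nat.sInf_le ⟨f, hf, rfl⟩

lemma Cmin_spec {P Q : Finset V} (h : P.card = Q.card) :
    ∃ f : V → V, Set.BijOn f ↑P ↑Q ∧ mcost G P f = Cmin G P Q :=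
  Nat.sInf_mem (mset_nonempty h)

lemma sum_comp_bijOn {P Q : Finset V} {f : V → V} (hf : Set.BijOn f ↑P ↑Q) (v : V → ℤ) :
    ∑ b ∈ Q, v b = ∑ a ∈ P, v (f a) := by
  refine (Finset.sum_bij (fun a _ => f a) ?_ ?_ ?_ ?_).symm
  · intro a ha; exact_mod_cast hf.mapsTo (by simpa using ha)
  · intro a ha b hb hab; exact hf.injOn (by simpa using ha) (by simpa using hb) hab
  · intro b hb
    obtain ⟨a, ha, rfl⟩ := hf.surjOn (by simpa using hb)
    exact ⟨a, by simpa using ha, rfl⟩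
  · intro a _; rfl

lemma weak_duality {P Q : Finset V} {f : V → V} (hf : Set.BijOn f ↑P ↑Q)
    {u v : V → ℤ} (hfeas : ∀ a ∈ P, ∀ b ∈ Q, u a - v b ≤ (G.dist a b : ℤ)) :
    (∑ a ∈ P, u a) - (∑ b ∈ Q, v b) ≤ (mcost G P f : ℤ) := by
  rw [sum_comp_bijOn hf v, ← Finset.sum_sub_distrib]
  have : (mcost G P f : ℤ) = ∑ a ∈ P, (G.dist a (f a) : ℤ) := by
    simp [mcost]
  rw [this]
  refine Finset.sum_le_sum fun a ha => ?_
  exact hfeas a ha (f a) (by exact_mod_cast hf.mapsTo (by simpa using ha))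

lemma egervary_aux {P Q : Finset V} (h : P.card = Q.card) :
    ∀ k : ℕ, ∀ u v : V → ℤ, (∀ a ∈ P, ∀ b ∈ Q, u a - v b ≤ (G.dist a b : ℤ)) →
    (Cmin G P Q : ℤ) - ((∑ a ∈ P, u a) - (∑ b ∈ Q, v b)) ≤ k →
    ∃ u' v' : V → ℤ, (∀ a ∈ P, ∀ b ∈ Q, u' a - v' b ≤ (G.dist a b : ℤ)) ∧
      (∑ a ∈ P, u' a) - (∑ b ∈ Q, v' b) = (Cmin G P Q : ℤ) := by
  intro k
  induction k with
  | zero =>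
    intro u v hfeas hk
    obtain ⟨f, hf, hfc⟩ := Cmin_spec (G := G) h
    have hle := weak_duality hf hfeas
    rw [hfc] at hle
    exact ⟨u, v, hfeas, by omega⟩
  | succ k ih =>
    intro u v hfeas hk
    obtain ⟨f, hf, hfc⟩ := Cmin_spec (G := G) h
    have hle := weak_duality hf hfeas
    rw [hfc] at hle
    by_cases heq : (∑ a ∈ P, u a) - (∑ b ∈ Q, v b) = (Cmin G P Q : ℤ)
    · exact ⟨u, v, hfeas, heq⟩
    have hlt : (∑ a ∈ P, u a) - (∑ b ∈ Q, v b) < (Cmin G P Q : ℤ) := lt_of_le_of_ne hle heq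
    -- tight sets
    set t : ↥P → Finset V := fun a => Q.filter (fun b => u ↑a - v b = (G.dist ↑a b : ℤ)) with ht
    by_cases hall : ∀ s : Finset ↥P, s.card ≤ (s.biUnion t).card
    · -- tight graph has a perfect matching: contradiction with value < Cmin
      obtain ⟨F, hFinj, hFt⟩ := (Finset.all_card_le_biUnion_card_iff_exists_injective t).mp hall
      set F' : V → V := fun z => if hz : z ∈ P then F ⟨z, hz⟩ else z with hF'
      have hmapsto : ∀ a ∈ P, F' a ∈ Q := by
        intro a ha
        have := hFt ⟨a, ha⟩
        simp only [ht, Finset.mem_filter] at this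
        simp only [hF', ha, dif_pos]
        exact this.1
      have hinj : Set.InjOn F' ↑P := by
        intro a ha b hb hab
        simp only [Finset.mem_coe] at ha hb
        simp only [hF', ha, hb, dif_pos] at hab
        exact congrArg Subtype.val (hFinj hab)
      have hbij := bijOn_of_mapsTo_injOn h hmapsto hinj
      have hval : (∑ a ∈ P, u a) - (∑ b ∈ Q, v b) = (mcost G P F' : ℤ) := by
        rw [sum_comp_bijOn hbij v, ← Finset.sum_sub_distrib]
        have : (mcost G P F' : ℤ) = ∑ a ∈ P, (G.dist a (F' a) : ℤ) := by simp [mcost]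
        rw [this]
        refine Finset.sum_congr rfl fun a ha => ?_
        have := hFt ⟨a, ha⟩
        simp only [ht, Finset.mem_filter] at this
        have h2 := this.2
        simp only [hF', ha, dif_pos]
        exact h2
      have := Cmin_le (G := G) hbij
      omega
    · push_neg at hall
      obtain ⟨s, hs⟩ := hall
      set S : Finset V := s.image Subtype.val with hS
      set N : Finset V := s.biUnion t with hN
      have hScard : S.card = s.card := by
        rw [hS]; exact Finset.card_image_of_injective s Subtype.coe_injective
      have hSsub : S ⊆ P := by
        intro a ha
        simp only [hS, Finset.mem_image] at ha
        obtain ⟨a', _, rfl⟩ := ha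
        exact a'.2
      have hNsub : N ⊆ Q := by
        intro b hb
        obtain ⟨a', _, hb'⟩ := Finset.mem_biUnion.mp hb
        exact (Finset.mem_filter.mp hb').1
      set u' : V → ℤ := fun a => if a ∈ S then u a + 1 else u a with hu'
      set v' : V → ℤ := fun b => if b ∈ N then v b + 1 else v b with hv'
      have hfeas' : ∀ a ∈ P, ∀ b ∈ Q, u' a - v' b ≤ (G.dist a b : ℤ) := by
        intro a ha b hb
        by_cases haS : a ∈ S
        · by_cases hbN : b ∈ N
          · simp only [hu', hv', haS, hbN, if_pos]
            have := hfeas a ha b hb; omega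
          · -- not tight
            rw [hS, Finset.mem_image] at haS
            obtain ⟨a', ha's, rfl⟩ := haS
            have haS : (↑a' : V) ∈ S := by
              rw [hS, Finset.mem_image]; exact ⟨a', ha's, rfl⟩
            have hbt : b ∉ t a' := fun hbt => hbN (Finset.mem_biUnion.mpr ⟨a', ha's, hbt⟩)
            have hnt : ¬(u ↑a' - v b = (G.dist ↑a' b : ℤ)) := by
              intro hcon
              exact hbt (Finset.mem_filter.mpr ⟨hb, hcon⟩)
            have := hfeas ↑a' ha b hb
            simp only [hu', hv', haS, hbN, if_pos, if_neg, not_false_iff]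
            omega
        · simp only [hu', hv', haS, if_neg, not_false_iff]
          have := hfeas a ha b hb
          by_cases hbN : b ∈ N <;> simp [hbN] <;> omega
      have hsplit : ∀ (R W : Finset V), W ⊆ R → ∀ w : V → ℤ,
          ∑ a ∈ R, (if a ∈ W then w a + 1 else w a) = (∑ a ∈ R, w a) + W.card := by
        intro R W hW w
        have hcongr : ∀ a ∈ R, (if a ∈ W then w a + 1 else w a) = w a + (if a ∈ W then 1 else 0) := by
          intro a _; by_cases haW : a ∈ W <;> simp [haW]
        rw [Finset.sum_congr rfl hcongr, Finset.sum_add_distrib]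
        congr 1
        rw [Finset.sum_ite_mem]
        have : R ∩ W = W := Finset.inter_eq_right.mpr hW
        simp [this]
      have hsum_u : ∑ a ∈ P, u' a = (∑ a ∈ P, u a) + S.card := hsplit P S hSsub u
      have hsum_v : ∑ b ∈ Q, v' b = (∑ b ∈ Q, v b) + N.card := hsplit Q N hNsub v
      refine ih u' v' hfeas' ?_
      have hcards : N.card < S.card := by rw [hScard]; exact_mod_cast hs
      push_cast
      push_cast at hk
      omega

theorem egervary {P Q : Finset V} (h : P.card = Q.card) :
    ∃ u v : V → ℤ, (∀ a ∈ P, ∀ b ∈ Q, u a - v b ≤ (G.dist a b : ℤ)) ∧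
      (∑ a ∈ P, u a) - (∑ b ∈ Q, v b) = (Cmin G P Q : ℤ) := by
  obtain ⟨u', v', h1, h2⟩ := egervary_aux (G := G) h (Cmin G P Q) (fun _ => 0) (fun _ => 0)
    (fun a _ b _ => by simp) (by simp)
  exact ⟨u', v', h1, h2⟩

/-- From Egerváry duality, produce a potential `g` which is 1-Lipschitz on `P ∪ Q`,
achieves `∑_P g - ∑_Q g = Cmin`, and such that every `b ∈ Q` has a witness `a ∈ P`
with `g b = g a - d a b`. -/
theorem exists_good_potential (hconn : G.Connected) {P Q : Finset V}
    (h : P.card = Q.card) (hQ : Q.Nonempty) :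
    ∃ g : V → ℤ,
      (∀ w ∈ P ∪ Q, ∀ w' ∈ P ∪ Q, g w - g w' ≤ (G.dist w w' : ℤ)) ∧
      (∑ a ∈ P, g a) - (∑ b ∈ Q, g b) = (Cmin G P Q : ℤ) ∧
      (∀ b ∈ Q, ∃ a ∈ P, g b = g a - (G.dist a b : ℤ)) := by
  have hP : P.Nonempty := by
    rw [← Finset.card_pos, h, Finset.card_pos]; exact hQ
  obtain ⟨u, v, hfeas, hval⟩ := egervary (G := G) h
  -- c-transforms
  set u' : V → ℤ := fun a => Q.inf' hQ (fun b => v b + (G.dist a b : ℤ)) with hu'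
  set v' : V → ℤ := fun b => P.sup' hP (fun a => u' a - (G.dist a b : ℤ)) with hv'
  have hu'_ge : ∀ a ∈ P, u a ≤ u' a := by
    intro a ha
    rw [hu']
    apply Finset.le_inf'
    intro b hb
    have := hfeas a ha b hb; omega
  have hu'_feas : ∀ (a : V), ∀ b ∈ Q, u' a - v b ≤ (G.dist a b : ℤ) := by
    intro a b hb
    have : u' a ≤ v b + (G.dist a b : ℤ) := Finset.inf'_le (fun b0 => v b0 + (G.dist a b0 : ℤ)) hb
    omega
  have hu'_lip : ∀ (a a' : V), u' a - u' a' ≤ (G.dist a a' : ℤ) := by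
    intro a a'
    obtain ⟨b, hb, hab⟩ := Finset.exists_mem_eq_inf' hQ (fun b => v b + (G.dist a' b : ℤ))
    have h1 : u' a ≤ v b + (G.dist a b : ℤ) := Finset.inf'_le (fun b0 => v b0 + (G.dist a b0 : ℤ)) hb
    have h2 : (G.dist a b : ℤ) ≤ (G.dist a a' : ℤ) + (G.dist a' b : ℤ) := by
      exact_mod_cast hconn.dist_triangle
    have h3 : u' a' = v b + (G.dist a' b : ℤ) := hab
    omega
  have hv'_le : ∀ b ∈ Q, v' b ≤ v b := by
    intro b hb
    rw [hv']
    apply Finset.sup'_le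
    intro a ha
    have := hu'_feas a b hb; omega
  have hv'_feas : ∀ a ∈ P, ∀ (b : V), u' a - v' b ≤ (G.dist a b : ℤ) := by
    intro a ha b
    have : u' a - (G.dist a b : ℤ) ≤ v' b := Finset.le_sup' (fun a0 => u' a0 - (G.dist a0 b : ℤ)) ha
    omega
  have hv'_lip : ∀ (b b' : V), v' b - v' b' ≤ (G.dist b b' : ℤ) := by
    intro b b'
    obtain ⟨a, ha, hab⟩ := Finset.exists_mem_eq_sup' hP (fun a => u' a - (G.dist a b : ℤ))
    have h1 : u' a - (G.dist a b' : ℤ) ≤ v' b' := Finset.le_sup' (fun a0 => u' a0 - (G.dist a0 b' : ℤ)) ha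
    have h2 : (G.dist a b' : ℤ) ≤ (G.dist a b : ℤ) + (G.dist b b' : ℤ) := by
      have := hconn.dist_triangle (u := a) (v := b) (w := b')
      exact_mod_cast this
    have h3 : v' b = u' a - (G.dist a b : ℤ) := hab
    omega
  have hcross : ∀ (a : V), ∀ (b : V), v' b - u' a ≤ (G.dist a b : ℤ) := by
    intro a b
    obtain ⟨a', ha', hab⟩ := Finset.exists_mem_eq_sup' hP (fun a0 => u' a0 - (G.dist a0 b : ℤ))
    have h1 : u' a' - u' a ≤ (G.dist a' a : ℤ) := hu'_lip a' a
    have h2 : (G.dist a' a : ℤ) ≤ (G.dist a' b : ℤ) + (G.dist b a : ℤ) := by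
      exact_mod_cast hconn.dist_triangle
    have h3 : (G.dist b a : ℤ) = (G.dist a b : ℤ) := by
      rw [SimpleGraph.dist_comm]
    have h4 : v' b = u' a' - (G.dist a' b : ℤ) := hab
    omega
  have hcoh : ∀ z ∈ P, z ∈ Q → u' z = v' z := by
    intro z hzP hzQ
    have h1 : u' z - (G.dist z z : ℤ) ≤ v' z := Finset.le_sup' (fun a0 => u' a0 - (G.dist a0 z : ℤ)) hzP
    have h2 : v' z ≤ u' z := by
      rw [hv']
      apply Finset.sup'_le
      intro a ha
      have := hu'_lip a z
      omega
    have h0 : G.dist z z = 0 := by simp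
    omega
  -- the potential
  set g : V → ℤ := fun w => if w ∈ Q then v' w else u' w with hg
  have hgP : ∀ a ∈ P, g a = u' a := by
    intro a ha
    rw [hg]
    by_cases haQ : a ∈ Q
    · simp only [haQ, if_pos]; exact (hcoh a ha haQ).symm
    · simp [haQ]
  have hgQ : ∀ b ∈ Q, g b = v' b := by intro b hb; simp [hg, hb]
  refine ⟨g, ?_, ?_, ?_⟩
  · intro w hw w' hw'
    rw [Finset.mem_union] at hw hw'
    by_cases hwQ : w ∈ Q <;> by_cases hw'Q : w' ∈ Q
    · rw [hgQ w hwQ, hgQ w' hw'Q]; exact hv'_lip w w'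
    · have hw'P : w' ∈ P := by tauto
      rw [hgQ w hwQ, hgP w' hw'P]
      have := hcross w' w
      have h3 : (G.dist w' w : ℤ) = (G.dist w w' : ℤ) := by
        rw [SimpleGraph.dist_comm]
      omega
    · have hwP : w ∈ P := by tauto
      rw [hgP w hwP, hgQ w' hw'Q]
      exact hv'_feas w hwP w'
    · have hwP : w ∈ P := by tauto
      have hw'P : w' ∈ P := by tauto
      rw [hgP w hwP, hgP w' hw'P]
      exact hu'_lip w w'
  · have e1 : ∑ a ∈ P, g a = ∑ a ∈ P, u' a := Finset.sum_congr rfl hgP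
    have e2 : ∑ b ∈ Q, g b = ∑ b ∈ Q, v' b := Finset.sum_congr rfl hgQ
    rw [e1, e2]
    have hge : (Cmin G P Q : ℤ) ≤ (∑ a ∈ P, u' a) - (∑ b ∈ Q, v' b) := by
      have h1 : ∑ a ∈ P, u a ≤ ∑ a ∈ P, u' a := Finset.sum_le_sum hu'_ge
      have h2 : ∑ b ∈ Q, v' b ≤ ∑ b ∈ Q, v b := Finset.sum_le_sum hv'_le
      omega
    have hle : (∑ a ∈ P, u' a) - (∑ b ∈ Q, v' b) ≤ (Cmin G P Q : ℤ) := by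
      obtain ⟨f, hf, hfc⟩ := Cmin_spec (G := G) h
      have := weak_duality (G := G) hf (u := u') (v := v') (fun a ha b hb => hv'_feas a ha b)
      rw [hfc] at this
      exact this
    omega
  · intro b hb
    obtain ⟨a, ha, hab⟩ := Finset.exists_mem_eq_sup' hP (fun a => u' a - (G.dist a b : ℤ))
    refine ⟨a, ha, ?_⟩
    rw [hgQ b hb, hgP a ha]
    exact hab

/-- McShane extension from a finite set. -/
theorem mcshane (hconn : G.Connected) {U : Finset V} (hU : U.Nonempty) (g : V → ℤ)
    (hg : ∀ w ∈ U, ∀ w' ∈ U, g w - g w' ≤ (G.dist w w' : ℤ)) :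
    ∃ f : V → ℤ, (∀ w w' : V, f w - f w' ≤ (G.dist w w' : ℤ)) ∧ ∀ u ∈ U, f u = g u := by
  set f : V → ℤ := fun w => U.inf' hU (fun z => g z + (G.dist w z : ℤ)) with hf
  refine ⟨f, ?_, ?_⟩
  · intro w w'
    obtain ⟨z, hz, hzw⟩ := Finset.exists_mem_eq_inf' hU (fun z => g z + (G.dist w' z : ℤ))
    have h1 : f w ≤ g z + (G.dist w z : ℤ) := Finset.inf'_le (fun z0 => g z0 + (G.dist w z0 : ℤ)) hz
    have h2 : (G.dist w z : ℤ) ≤ (G.dist w w' : ℤ) + (G.dist w' z : ℤ) := by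
      exact_mod_cast hconn.dist_triangle
    have h3 : f w' = g z + (G.dist w' z : ℤ) := hzw
    omega
  · intro z hz
    have h1 : f z ≤ g z := by
      have h0 : f z ≤ g z + (G.dist z z : ℤ) := Finset.inf'_le (fun z0 => g z0 + (G.dist z z0 : ℤ)) hz
      have h00 : G.dist z z = 0 := by simp
      omega
    have h2 : g z ≤ f z := by
      rw [hf]
      apply Finset.le_inf'
      intro w hw
      have := hg z hz w hw
      omega
    omega

section Setting

variable {V : Type*} {G : SimpleGraph V} [inst : ∀ v : V, Fintype (G.neighborSet v)]

lemma dist_le_one_add {u v w : V} (hconn : G.Connected) (h : G.Adj u v) :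
    G.dist u w ≤ 1 + G.dist v w := by
  have h1 := hconn.dist_triangle (u := u) (v := v) (w := w)
  have h2 : G.dist u v = 1 := SimpleGraph.dist_eq_one_iff_adj.mpr h
  omega

lemma dist_two_of {u w : V} (hconn : G.Connected) (hne : u ≠ w) (hnadj : ¬ G.Adj u w)
    (hub : G.dist u w ≤ 2) : G.dist u w = 2 := by
  have h0 : G.dist u w ≠ 0 := fun h => hne (hconn.dist_eq_zero_iff.mp h)
  have h1 : G.dist u w ≠ 1 := fun h => hnadj (SimpleGraph.dist_eq_one_iff_adj.mp h)
  omega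

variable {x y : V}

lemma mem_Nx_dist (hconn : G.Connected) {z : V} (hz : z ∈ G.neighborFinset x) : G.dist x z = 1 :=
  SimpleGraph.dist_eq_one_iff_adj.mpr ((SimpleGraph.mem_neighborFinset _ _ _).mp hz)

/-- distance between two neighbours of `x` is at most 2 -/
lemma dist_nbr_nbr (hconn : G.Connected) {z z' : V} (hz : z ∈ G.neighborFinset x)
    (hz' : z' ∈ G.neighborFinset x) : G.dist z z' ≤ 2 := by
  have h1 := hconn.dist_triangle (u := z) (v := x) (w := z')
  have h2 : G.dist z x = 1 := by
    rw [SimpleGraph.dist_comm]; exact mem_Nx_dist hconn hz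
  have h3 := mem_Nx_dist hconn hz'
  omega

lemma dist_cross (hconn : G.Connected) (hadj : G.Adj x y) {z w : V}
    (hz : z ∈ G.neighborFinset x) (hw : w ∈ G.neighborFinset y) : G.dist z w ≤ 3 := by
  have h1 := hconn.dist_triangle (u := z) (v := x) (w := w)
  have h2 := hconn.dist_triangle (u := x) (v := y) (w := w)
  have h3 : G.dist z x = 1 := by rw [SimpleGraph.dist_comm]; exact mem_Nx_dist hconn hz
  have h4 : G.dist x y = 1 := SimpleGraph.dist_eq_one_iff_adj.mpr hadj
  have h5 := mem_Nx_dist (x := y) hconn hw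
  omega

lemma dist_pos_ne (hconn : G.Connected) {u w : V} (h : u ≠ w) : 1 ≤ G.dist u w := by
  have h0 : G.dist u w ≠ 0 := fun h0 => h (hconn.dist_eq_zero_iff.mp h0)
  omega

lemma dist_Rx_y (hconn : G.Connected) (hadj : G.Adj x y) {z : V}
    (hz : z ∈ G.neighborFinset x) (hzy : z ≠ y) (hzny : z ∉ G.neighborFinset y) :
    G.dist y z = 2 := by
  apply dist_two_of hconn (Ne.symm hzy)
  · intro hc
    exact hzny ((SimpleGraph.mem_neighborFinset _ _ _).mpr hc)
  · have h1 := hconn.dist_triangle (u := y) (v := x) (w := z)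
    have h2 : G.dist y x = 1 := SimpleGraph.dist_eq_one_iff_adj.mpr hadj.symm
    have h3 := mem_Nx_dist hconn hz
    omega

section Surgery

lemma y_mem_Nx (hadj : G.Adj x y) : y ∈ G.neighborFinset x := (SimpleGraph.mem_neighborFinset _ _ _).mpr hadj

lemma x_mem_Ny (hadj : G.Adj x y) : x ∈ G.neighborFinset y := (SimpleGraph.mem_neighborFinset _ _ _).mpr hadj.symm

lemma x_not_mem_Nx : x ∉ G.neighborFinset x := by
  simp [SimpleGraph.mem_neighborFinset]

lemma erase_card_eq (hadj : G.Adj x y)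
    (hcard : (G.neighborFinset x).card = (G.neighborFinset y).card) :
    ((G.neighborFinset x).erase y).card = ((G.neighborFinset y).erase x).card := by
  rw [Finset.card_erase_of_mem (y_mem_Nx hadj), Finset.card_erase_of_mem (x_mem_Ny hadj), hcard]

/-- `C' ≤ C_N + 1` -/
lemma surgery1 (hadj : G.Adj x y)
    (hcard : (G.neighborFinset x).card = (G.neighborFinset y).card) :
    Cmin G (G.neighborFinset x) (G.neighborFinset y) ≤
      Cmin G ((G.neighborFinset x).erase y) ((G.neighborFinset y).erase x) + 1 := by
  set Nx := G.neighborFinset x with hNx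
  set Ny := G.neighborFinset y with hNy
  set A := Nx.erase y with hA
  set B := Ny.erase x with hB
  obtain ⟨fA, hbij, hcost0⟩ := Cmin_spec (G := G) (erase_card_eq hadj hcard)
  have hcost : mcost G A fA = Cmin G A B := hcost0
  set F : V → V := fun z => if z = y then x else fA z with hF
  have hyNx : y ∈ Nx := y_mem_Nx hadj
  have hxNy : x ∈ Ny := x_mem_Ny hadj
  have hmapsto : ∀ z ∈ Nx, F z ∈ Ny := by
    intro z hz
    by_cases hzy : z = y
    · simp only [hF, hzy, if_pos]; exact hxNy
    · simp only [hF, hzy, if_neg, not_false_iff]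
      have hzA : z ∈ A := Finset.mem_erase.mpr ⟨hzy, hz⟩
      exact Finset.erase_subset _ _ (hbij.mapsTo hzA)
  have hinj : Set.InjOn F ↑Nx := by
    intro z hz z' hz' hzz
    simp only [Finset.mem_coe] at hz hz'
    by_cases h1 : z = y <;> by_cases h2 : z' = y
    · rw [h1, h2]
    · exfalso
      simp only [hF, h1, h2, if_pos, if_neg, not_false_iff] at hzz
      have : fA z' ∈ B := hbij.mapsTo (Finset.mem_erase.mpr ⟨h2, hz'⟩)
      rw [← hzz] at this
      exact (Finset.mem_erase.mp this).1 rfl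
    · exfalso
      simp only [hF, h1, h2, if_pos, if_neg, not_false_iff] at hzz
      have : fA z ∈ B := hbij.mapsTo (Finset.mem_erase.mpr ⟨h1, hz⟩)
      rw [hzz] at this
      exact (Finset.mem_erase.mp this).1 rfl
    · simp only [hF, h1, h2, if_neg, not_false_iff] at hzz
      exact hbij.injOn (Finset.mem_erase.mpr ⟨h1, hz⟩) (Finset.mem_erase.mpr ⟨h2, hz'⟩) hzz
  have hbijF := bijOn_of_mapsTo_injOn hcard hmapsto hinj
  have hsplit : mcost G Nx F = G.dist y (F y) + ∑ z ∈ A, G.dist z (F z) :=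
    (Finset.add_sum_erase Nx (fun z => G.dist z (F z)) hyNx).symm
  have hcosteq : mcost G Nx F = 1 + mcost G A fA := by
    rw [hsplit]
    have h1 : G.dist y (F y) = 1 := by
      simp only [hF, if_pos]
      exact SimpleGraph.dist_eq_one_iff_adj.mpr hadj.symm
    have h2 : ∑ z ∈ A, G.dist z (F z) = mcost G A fA := by
      refine Finset.sum_congr rfl fun z hz => ?_
      have : z ≠ y := (Finset.mem_erase.mp hz).1
      simp [hF, this]
    omega
  have hthis := Cmin_le (G := G) hbijF
  rw [hcosteq, hcost] at hthis
  have hgoal : Cmin G Nx Ny ≤ Cmin G A B + 1 := by omega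
  exact hgoal

/-- `C_N ≤ C' + 1` -/
lemma surgery2 (hconn : G.Connected) (hadj : G.Adj x y)
    (hcard : (G.neighborFinset x).card = (G.neighborFinset y).card) :
    Cmin G ((G.neighborFinset x).erase y) ((G.neighborFinset y).erase x) ≤
      Cmin G (G.neighborFinset x) (G.neighborFinset y) + 1 := by
  set Nx := G.neighborFinset x with hNx
  set Ny := G.neighborFinset y with hNy
  set A := Nx.erase y with hA
  set B := Ny.erase x with hB
  have hyNx : y ∈ Nx := y_mem_Nx hadj
  have hxNy : x ∈ Ny := x_mem_Ny hadj
  have hAB : A.card = B.card := erase_card_eq hadj hcard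
  obtain ⟨f, hbij, hcost0⟩ := Cmin_spec (G := G) hcard
  have hcost : mcost G Nx f = Cmin G Nx Ny := hcost0
  by_cases hfy : f y = x
  · -- restrict
    have hmapsto : ∀ z ∈ A, f z ∈ B := by
      intro z hz
      obtain ⟨hzy, hzNx⟩ := Finset.mem_erase.mp hz
      refine Finset.mem_erase.mpr ⟨?_, hbij.mapsTo hzNx⟩
      intro hc
      exact hzy (hbij.injOn hzNx hyNx (by rw [hc, hfy]))
    have hinj : Set.InjOn f ↑A := fun a ha b hb hab =>
      hbij.injOn (Finset.mem_coe.mpr (Finset.mem_of_mem_erase (Finset.mem_coe.mp ha)))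
        (Finset.mem_coe.mpr (Finset.mem_of_mem_erase (Finset.mem_coe.mp hb))) hab
    have hbijA := bijOn_of_mapsTo_injOn hAB hmapsto hinj
    have hsplit : mcost G Nx f = G.dist y (f y) + mcost G A f :=
      (Finset.add_sum_erase Nx (fun z => G.dist z (f z)) hyNx).symm
    have hthis := Cmin_le (G := G) hbijA
    rw [hcost] at hsplit
    have hgoal : Cmin G A B ≤ Cmin G Nx Ny + 1 := by omega
    exact hgoal
  · -- rewire
    obtain ⟨a2, ha2, hfa2⟩ := hbij.surjOn (Finset.mem_coe.mpr hxNy)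
    simp only [Finset.mem_coe] at ha2
    have ha2y : a2 ≠ y := fun h => hfy (by rw [← h]; exact hfa2)
    have ha2A : a2 ∈ A := Finset.mem_erase.mpr ⟨ha2y, ha2⟩
    have hfyB : f y ∈ B := Finset.mem_erase.mpr ⟨hfy, hbij.mapsTo hyNx⟩
    set F : V → V := fun z => if z = a2 then f y else f z with hF
    have hmapsto : ∀ z ∈ A, F z ∈ B := by
      intro z hz
      obtain ⟨hzy, hzNx⟩ := Finset.mem_erase.mp hz
      by_cases hza : z = a2
      · simp only [hF, hza, if_pos]; exact hfyB
      · simp only [hF, hza, if_neg, not_false_iff]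
        refine Finset.mem_erase.mpr ⟨?_, hbij.mapsTo hzNx⟩
        intro hc
        exact hza (hbij.injOn hzNx ha2 (by rw [hc, hfa2]))
    have hinj : Set.InjOn F ↑A := by
      intro z hz z' hz' hzz
      simp only [Finset.mem_coe] at hz hz'
      by_cases h1 : z = a2 <;> by_cases h2 : z' = a2
      · rw [h1, h2]
      · exfalso
        simp only [hF, h1, h2, if_pos, if_neg, not_false_iff] at hzz
        have := hbij.injOn hyNx (Finset.mem_of_mem_erase hz') hzz
        exact (Finset.mem_erase.mp hz').1 (by rw [← this])
      · exfalso
        simp only [hF, h1, h2, if_pos, if_neg, not_false_iff] at hzz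
        have := hbij.injOn (Finset.mem_of_mem_erase hz) hyNx hzz
        exact (Finset.mem_erase.mp hz).1 this
      · simp only [hF, h1, h2, if_neg, not_false_iff] at hzz
        exact hbij.injOn (Finset.mem_of_mem_erase hz) (Finset.mem_of_mem_erase hz') hzz
    have hbijA := bijOn_of_mapsTo_injOn hAB hmapsto hinj
    -- cost computation
    have ha2A' : a2 ∈ A.erase a2 → False := fun h => (Finset.mem_erase.mp h).1 rfl
    have hsplitF : mcost G A F = G.dist a2 (f y) + ∑ z ∈ A.erase a2, G.dist z (f z) := by
      have e1 : mcost G A F = G.dist a2 (F a2) + ∑ z ∈ A.erase a2, G.dist z (F z) :=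
        (Finset.add_sum_erase A (fun z => G.dist z (F z)) ha2A).symm
      have e2 : F a2 = f y := by simp [hF]
      have e3 : ∑ z ∈ A.erase a2, G.dist z (F z) = ∑ z ∈ A.erase a2, G.dist z (f z) :=
        Finset.sum_congr rfl (fun z hz => by simp [hF, (Finset.mem_erase.mp hz).1])
      rw [e1, e2, e3]
    have hyA2 : y ∈ Nx.erase a2 := Finset.mem_erase.mpr ⟨Ne.symm ha2y, hyNx⟩
    have hsplitf : mcost G Nx f =
        G.dist a2 (f a2) + (G.dist y (f y) + ∑ z ∈ (Nx.erase a2).erase y, G.dist z (f z)) := by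
      have e1 : mcost G Nx f = G.dist a2 (f a2) + ∑ z ∈ Nx.erase a2, G.dist z (f z) :=
        (Finset.add_sum_erase Nx (fun z => G.dist z (f z)) ha2).symm
      have e2 : ∑ z ∈ Nx.erase a2, G.dist z (f z)
          = G.dist y (f y) + ∑ z ∈ (Nx.erase a2).erase y, G.dist z (f z) :=
        (Finset.add_sum_erase _ (fun z => G.dist z (f z)) hyA2).symm
      rw [e1, e2]
    have herase_comm : (Nx.erase a2).erase y = A.erase a2 := by
      rw [hA, Finset.erase_right_comm]
    have htri : G.dist a2 (f y) ≤ G.dist a2 x + G.dist x y + G.dist y (f y) := by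
      have h1 := hconn.dist_triangle (u := a2) (v := y) (w := f y)
      have h2 := hconn.dist_triangle (u := a2) (v := x) (w := y)
      omega
    have hda2x : G.dist a2 (f a2) = G.dist a2 x := by rw [hfa2]
    have hdxy : G.dist x y = 1 := SimpleGraph.dist_eq_one_iff_adj.mpr hadj
    have hle := Cmin_le (G := G) hbijA
    rw [hsplitF] at hle
    rw [hcost] at hsplitf
    rw [herase_comm] at hsplitf
    have hgoal : Cmin G A B ≤ Cmin G Nx Ny + 1 := by omega
    exact hgoal

end Surgery

lemma clamp_lip (p s s' D : ℤ) (h : s - s' ≤ D) (h0 : 0 ≤ D) :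
    max (p-1) (min p s) - max (p-1) (min p s') ≤ D := by
  have A1 : min p s ≤ min p s' + D := by
    have h1 : min p s ≤ min (p + D) (s' + D) :=
      min_le_min (by omega) (by omega)
    rw [min_add_add_right] at h1
    exact h1
  have A2 : p - 1 ≤ max (p-1) (min p s') := le_max_left _ _
  have A3 : min p s' ≤ max (p-1) (min p s') := le_max_right _ _
  have A4 : max (p-1) (min p s) ≤ max (p-1) (min p s') + D := max_le (by omega) (by omega)
  omega

lemma clamp_mix1 (p s t D : ℤ) (h1 : s - t ≤ D) (h2 : p - 1 ≤ t) (h3 : 1 ≤ D) :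
    max (p-1) (min p s) - t ≤ D := by
  rcases le_total p s with h | h
  · rw [min_eq_left h, max_eq_right (by omega : p - 1 ≤ p)]; omega
  · rw [min_eq_right h]
    have := max_le (show p - 1 ≤ t + D by omega) (show s ≤ t + D by omega)
    omega

lemma clamp_mix2 (p s t D : ℤ) (h1 : s - t ≤ D) (h2 : p ≤ t + 2) (h3 : 1 ≤ D) :
    max (p-1) (min p s) - t ≤ D := by
  rcases le_total p s with h | h
  · rw [min_eq_left h, max_eq_right (by omega : p - 1 ≤ p)]; omega
  · rw [min_eq_right h]
    have := max_le (show p - 1 ≤ t + D by omega) (show s ≤ t + D by omega)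
    omega

lemma clamp_mix3 (p s t D : ℤ) (h1 : t - s ≤ D) (h2 : t ≤ p + 1) (h3 : 1 ≤ D) :
    t - max (p-1) (min p s) ≤ D := by
  rcases le_total p s with h | h
  · rw [min_eq_left h, max_eq_right (by omega : p - 1 ≤ p)]; omega
  · rw [min_eq_right h]
    have := le_max_right (p-1) s
    omega

lemma cert0 (hconn : G.Connected) (hadj : G.Adj x y)
    (hcard : (G.neighborFinset x).card = (G.neighborFinset y).card) :
    ∃ f : V → ℤ, (∀ w w' : V, f w - f w' ≤ (G.dist w w' : ℤ)) ∧
      (∑ a ∈ G.neighborFinset x, f a) - (∑ b ∈ G.neighborFinset y, f b)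
        = (Cmin G (G.neighborFinset x) (G.neighborFinset y) : ℤ) := by
  obtain ⟨g, hLip, hsum, -⟩ := exists_good_potential hconn hcard ⟨x, x_mem_Ny hadj⟩
  obtain ⟨f, hfLip, hfU⟩ := mcshane hconn
    (U := G.neighborFinset x ∪ G.neighborFinset y) ⟨x, Finset.mem_union_right _ (x_mem_Ny hadj)⟩ g hLip
  refine ⟨f, hfLip, ?_⟩
  rw [Finset.sum_congr rfl (fun a ha => hfU a (Finset.mem_union_left _ ha)),
    Finset.sum_congr rfl (fun b hb => hfU b (Finset.mem_union_right _ hb))]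
  exact hsum

lemma certA (hconn : G.Connected) (hadj : G.Adj x y)
    (hcard : (G.neighborFinset x).card = (G.neighborFinset y).card) :
    ∃ f : V → ℤ, (∀ w w' : V, f w - f w' ≤ (G.dist w w' : ℤ)) ∧ f x - f y = 1 ∧
      (∑ a ∈ G.neighborFinset x, f a) - (∑ b ∈ G.neighborFinset y, f b)
        = (Cmin G ((G.neighborFinset x).erase y) ((G.neighborFinset y).erase x) : ℤ) - 1 := by
  classical
  have hxy : x ≠ y := hadj.ne
  have hyNx : y ∈ G.neighborFinset x := y_mem_Nx hadj
  have hxNy : x ∈ G.neighborFinset y := x_mem_Ny hadj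
  have hxNx : x ∉ G.neighborFinset x := by simp
  have hyNy : y ∉ G.neighborFinset y := by simp
  set Nx := G.neighborFinset x with hNxdef
  set Ny := G.neighborFinset y with hNydef
  set A := Nx.erase y with hA
  set B := Ny.erase x with hB
  have hAB : A.card = B.card := erase_card_eq hadj hcard
  set T := Nx ∩ Ny with hT
  set Rx := A \ Ny with hRx
  set Ry := B \ Nx with hRy
  have hdxy : G.dist x y = 1 := SimpleGraph.dist_eq_one_iff_adj.mpr hadj
  have hdyx : G.dist y x = 1 := by rw [SimpleGraph.dist_comm]; exact hdxy
  -- membership facts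
  have hTmem : ∀ z ∈ T, z ∈ Nx ∧ z ∈ Ny ∧ z ≠ x ∧ z ≠ y := by
    intro z hz
    obtain ⟨h1, h2⟩ := Finset.mem_inter.mp hz
    exact ⟨h1, h2, fun h => hxNx (h ▸ h1), fun h => hyNy (h ▸ h2)⟩
  have hRxmem : ∀ a ∈ Rx, a ∈ Nx ∧ a ∉ Ny ∧ a ≠ x ∧ a ≠ y := by
    intro a ha
    obtain ⟨h1, h2⟩ := Finset.mem_sdiff.mp ha
    obtain ⟨h3, h4⟩ := Finset.mem_erase.mp h1
    exact ⟨h4, h2, fun h => hxNx (h ▸ h4), h3⟩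
  have hRymem : ∀ b ∈ Ry, b ∈ Ny ∧ b ∉ Nx ∧ b ≠ x ∧ b ≠ y := by
    intro b hb
    obtain ⟨h1, h2⟩ := Finset.mem_sdiff.mp hb
    obtain ⟨h3, h4⟩ := Finset.mem_erase.mp h1
    exact ⟨h4, h2, h3, fun h => hyNy (h ▸ h4)⟩
  have hAeq : T ∪ Rx = A := by
    ext z
    simp only [Finset.mem_union, Finset.mem_inter, Finset.mem_sdiff, Finset.mem_erase, hRx, hA, hT]
    constructor
    · rintro (⟨h1, h2⟩ | ⟨h1, _⟩)
      · exact ⟨fun hzy => hyNy (hzy ▸ h2), h1⟩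
      · exact h1
    · rintro ⟨h1, h2⟩
      by_cases hz : z ∈ Ny
      · exact Or.inl ⟨h2, hz⟩
      · exact Or.inr ⟨⟨h1, h2⟩, hz⟩
  have hBeq : T ∪ Ry = B := by
    ext z
    simp only [Finset.mem_union, Finset.mem_inter, Finset.mem_sdiff, Finset.mem_erase, hRy, hB, hT]
    constructor
    · rintro (⟨h1, h2⟩ | ⟨h1, _⟩)
      · exact ⟨fun hzx => hxNx (hzx ▸ h1), h2⟩
      · exact h1
    · rintro ⟨h1, h2⟩
      by_cases hz : z ∈ Nx
      · exact Or.inl ⟨hz, h2⟩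
      · exact Or.inr ⟨⟨h1, h2⟩, hz⟩
  have hdisjTRx : Disjoint T Rx := by
    rw [Finset.disjoint_left]
    intro z hz hz'
    exact ((Finset.mem_sdiff.mp hz').2) ((Finset.mem_inter.mp hz).2)
  have hdisjTRy : Disjoint T Ry := by
    rw [Finset.disjoint_left]
    intro z hz hz'
    exact ((Finset.mem_sdiff.mp hz').2) ((Finset.mem_inter.mp hz).1)
  have hRxRycard : Rx.card = Ry.card := by
    have h1 : T.card + Rx.card = A.card := by
      rw [← Finset.card_union_of_disjoint hdisjTRx, hAeq]
    have h2 : T.card + Ry.card = B.card := by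
      rw [← Finset.card_union_of_disjoint hdisjTRy, hBeq]
    omega
  by_cases hRxe : Rx = ∅
  · -- no private neighbours
    have hRye : Ry = ∅ := Finset.card_eq_zero.mp (by rw [← hRxRycard, hRxe]; simp)
    have hAT : A = T := by rw [← hAeq, hRxe, Finset.union_empty]
    have hBT : B = T := by rw [← hBeq, hRye, Finset.union_empty]
    have hC0 : Cmin G A B = 0 := by
      have hle := Cmin_le (G := G) (f := id) (P := A) (Q := B)
        (by rw [hAT, hBT]; exact Set.bijOn_id _)
      have : mcost G A id = 0 := by
        apply Finset.sum_eq_zero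
        intro z _
        simp [SimpleGraph.dist_self]
      omega
    refine ⟨fun w => if w = x then 1 else 0, ?_, ?_, ?_⟩
    · intro w w'
      have hd : (0:ℤ) ≤ (G.dist w w' : ℤ) := Int.natCast_nonneg _
      by_cases h1 : w = x <;> by_cases h2 : w' = x
      · subst h1; subst h2; simp
      · subst h1
        have h3 := dist_pos_ne (G := G) hconn (Ne.symm h2)
        simp only [if_pos, h2, if_neg, not_false_iff]
        omega
      · subst h2
        simp only [h1, if_neg, not_false_iff, if_pos]
        omega
      · simp only [h1, h2, if_neg, not_false_iff]
        omega
    · simp [hxy, Ne.symm hxy]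
    · have h1 : ∑ a ∈ Nx, (if a = x then (1:ℤ) else 0) = 0 := by
        apply Finset.sum_eq_zero
        intro a ha
        have : a ≠ x := fun h => hxNx (h ▸ ha)
        simp [this]
      have h2 : ∑ b ∈ Ny, (if b = x then (1:ℤ) else 0) = 1 := by
        rw [Finset.sum_ite_eq' Ny x (fun _ => (1:ℤ))]
        simp [hxNy]
      rw [h1, h2, hC0]
      simp
  · -- main case
    have hRxne : Rx.Nonempty := Finset.nonempty_of_ne_empty hRxe
    have hRyne : Ry.Nonempty := by
      rw [← Finset.card_pos, ← hRxRycard, Finset.card_pos]; exact hRxne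
    have hBne : B.Nonempty := by
      obtain ⟨b, hb⟩ := hRyne
      exact ⟨b, by rw [← hBeq]; exact Finset.mem_union_right _ hb⟩
    obtain ⟨g, hgLip, hgsum, hgwit⟩ := exists_good_potential hconn hAB hBne
    have hmemA : ∀ z ∈ T, z ∈ A ∪ B := fun z hz =>
      Finset.mem_union_left _ (by rw [← hAeq]; exact Finset.mem_union_left _ hz)
    have hmemRx : ∀ a ∈ Rx, a ∈ A ∪ B := fun a ha =>
      Finset.mem_union_left _ (by rw [← hAeq]; exact Finset.mem_union_right _ ha)
    have hmemRy : ∀ b ∈ Ry, b ∈ A ∪ B := fun b hb =>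
      Finset.mem_union_right _ (by rw [← hBeq]; exact Finset.mem_union_right _ hb)
    -- structural bound: g b - g a ≤ 1 for a ∈ Rx, b ∈ Ry
    have h3 : ∀ a ∈ Rx, ∀ b ∈ Ry, g b - g a ≤ 1 := by
      intro a ha b hb
      obtain ⟨hbNy, hbNx, hbx, hby⟩ := hRymem b hb
      obtain ⟨haNx, haNy, hax, hay⟩ := hRxmem a ha
      have hbB : b ∈ B := Finset.mem_erase.mpr ⟨hbx, hbNy⟩
      obtain ⟨a', ha', hwit⟩ := hgwit b hbB
      have ha'Nx : a' ∈ Nx := Finset.mem_of_mem_erase ha'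
      have hLipa : g a' - g a ≤ (G.dist a' a : ℤ) := hgLip a'
        (Finset.mem_union_left _ ha') a (Finset.mem_union_left _ (by
          rw [← hAeq]; exact Finset.mem_union_right _ ha))
      have hd1 : G.dist a' a ≤ 2 := dist_nbr_nbr hconn ha'Nx haNx
      have hd2 : 1 ≤ G.dist a' b := dist_pos_ne hconn (fun h => hbNx (h ▸ ha'Nx))
      omega
    -- choose the level p
    set p : ℤ := max ((Rx.sup' hRxne g) - 1) (Ry.sup' hRyne g) with hp
    have hp1 : ∀ a ∈ Rx, g a - 1 ≤ p := fun a ha =>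
      le_trans (by have := Finset.le_sup' g ha; omega) (le_max_left _ _)
    have hp2 : ∀ b ∈ Ry, g b ≤ p := fun b hb =>
      le_trans (Finset.le_sup' g hb) (le_max_right _ _)
    have hp3 : ∀ a ∈ Rx, p ≤ g a + 1 := by
      intro a ha
      obtain ⟨haNx, haNy, hax, hay⟩ := hRxmem a ha
      apply max_le
      · have : Rx.sup' hRxne g ≤ g a + 2 := by
          apply Finset.sup'_le
          intro a' ha'
          have := hgLip a' (hmemRx a' ha') a (hmemRx a ha)
          have hd := dist_nbr_nbr hconn (hRxmem a' ha').1 haNx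
          omega
        omega
      · apply Finset.sup'_le
        intro b hb
        have := h3 a ha b hb
        omega
    have hp4 : ∀ b ∈ Ry, p ≤ g b + 2 := by
      intro b hb
      obtain ⟨hbNy, hbNx, hbx, hby⟩ := hRymem b hb
      apply max_le
      · have : Rx.sup' hRxne g ≤ g b + 3 := by
          apply Finset.sup'_le
          intro a' ha'
          have := hgLip a' (hmemRx a' ha') b (hmemRy b hb)
          have hd := dist_cross hconn hadj (hRxmem a' ha').1 hbNy
          omega
        omega
      · apply Finset.sup'_le
        intro b' hb'
        have := hgLip b' (hmemRy b' hb') b (hmemRy b hb)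
        have hd := dist_nbr_nbr (x := y) hconn (hRymem b' hb').1 hbNy
        omega
    -- the adjusted potential
    set cl : V → ℤ := fun z => max (p-1) (min p (g z)) with hcl
    set g' : V → ℤ := fun w => if w = x then p else if w = y then p - 1 else if w ∈ T then cl w else g w with hg'
    have hg'x : g' x = p := by simp [hg']
    have hg'y : g' y = p - 1 := by simp [hg', Ne.symm hxy]
    have hg'T : ∀ z ∈ T, g' z = cl z ∧ p - 1 ≤ g' z ∧ g' z ≤ p := by
      intro z hz
      obtain ⟨-, -, hzx, hzy⟩ := hTmem z hz
      have he : g' z = cl z := by simp [hg', hzx, hzy, hz]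
      refine ⟨he, ?_, ?_⟩
      · rw [he]; exact le_max_left _ _
      · rw [he]; exact max_le (by omega) (min_le_left _ _)
    have hg'Rx : ∀ a ∈ Rx, g' a = g a := by
      intro a ha
      obtain ⟨-, haNy, hax, hay⟩ := hRxmem a ha
      have haT : a ∉ T := fun h => haNy ((Finset.mem_inter.mp h).2)
      simp [hg', hax, hay, haT]
    have hg'Ry : ∀ b ∈ Ry, g' b = g b := by
      intro b hb
      obtain ⟨-, hbNx, hbx, hby⟩ := hRymem b hb
      have hbT : b ∉ T := fun h => hbNx ((Finset.mem_inter.mp h).1)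
      simp [hg', hbx, hby, hbT]
    set U : Finset V := insert x (insert y (Nx ∪ Ny)) with hU
    have hclass : ∀ w ∈ U, w = x ∨ w = y ∨ w ∈ T ∨ w ∈ Rx ∨ w ∈ Ry := by
      intro w hw
      rcases Finset.mem_insert.mp hw with h | hw
      · exact Or.inl h
      rcases Finset.mem_insert.mp hw with h | hw
      · exact Or.inr (Or.inl h)
      rcases Finset.mem_union.mp hw with h | h
      · by_cases hwy : w = y
        · exact Or.inr (Or.inl hwy)
        · have hwA : w ∈ A := Finset.mem_erase.mpr ⟨hwy, h⟩
          rw [← hAeq] at hwA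
          rcases Finset.mem_union.mp hwA with h' | h'
          · exact Or.inr (Or.inr (Or.inl h'))
          · exact Or.inr (Or.inr (Or.inr (Or.inl h')))
      · by_cases hwx : w = x
        · exact Or.inl hwx
        · have hwB : w ∈ B := Finset.mem_erase.mpr ⟨hwx, h⟩
          rw [← hBeq] at hwB
          rcases Finset.mem_union.mp hwB with h' | h'
          · exact Or.inr (Or.inr (Or.inl h'))
          · exact Or.inr (Or.inr (Or.inr (Or.inr h')))
    have hdT : ∀ z ∈ T, G.dist x z = 1 ∧ G.dist y z = 1 := fun z hz =>
      ⟨mem_Nx_dist hconn (hTmem z hz).1, mem_Nx_dist (x := y) hconn (hTmem z hz).2.1⟩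
    have hdRx : ∀ a ∈ Rx, G.dist x a = 1 ∧ G.dist y a = 2 := by
      intro a ha
      obtain ⟨h1, h2, _, h4⟩ := hRxmem a ha
      exact ⟨mem_Nx_dist hconn h1, dist_Rx_y hconn hadj h1 h4 h2⟩
    have hdRy : ∀ b ∈ Ry, G.dist y b = 1 ∧ G.dist x b = 2 := by
      intro b hb
      obtain ⟨h1, h2, h3, -⟩ := hRymem b hb
      exact ⟨mem_Nx_dist (x := y) hconn h1, dist_Rx_y (x := y) (y := x) hconn hadj.symm h1 h3 h2⟩
    have hgL : ∀ w, (w ∈ T ∨ w ∈ Rx ∨ w ∈ Ry) → ∀ w', (w' ∈ T ∨ w' ∈ Rx ∨ w' ∈ Ry) →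
        g w - g w' ≤ (G.dist w w' : ℤ) := by
      intro w hw w' hw'
      apply hgLip
      · rcases hw with h|h|h
        exacts [hmemA w h, hmemRx w h, hmemRy w h]
      · rcases hw' with h|h|h
        exacts [hmemA w' h, hmemRx w' h, hmemRy w' h]
    have hLipU : ∀ w ∈ U, ∀ w' ∈ U, g' w - g' w' ≤ (G.dist w w' : ℤ) := by
      intro w hw w' hw'
      have hd0 : (0:ℤ) ≤ (G.dist w w' : ℤ) := Int.natCast_nonneg _
      rcases hclass w hw with rfl | rfl | hT1 | hR1 | hR1 <;>
        rcases hclass w' hw' with rfl | rfl | hT2 | hR2 | hR2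
      · rw [hg'x]; omega
      · rw [hg'x, hg'y]; omega
      · obtain ⟨he, hlo, hhi⟩ := hg'T w' hT2
        have hd := (hdT w' hT2).1
        rw [hg'x]; omega
      · rw [hg'x, hg'Rx w' hR2]
        have hd := (hdRx w' hR2).1
        have h5 := hp3 w' hR2
        omega
      · rw [hg'x, hg'Ry w' hR2]
        have hd := (hdRy w' hR2).2
        have h5 := hp4 w' hR2
        omega
      · rw [hg'y, hg'x]
        omega
      · rw [hg'y]; omega
      · obtain ⟨he, hlo, hhi⟩ := hg'T w' hT2
        have hd := (hdT w' hT2).2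
        rw [hg'y]; omega
      · rw [hg'y, hg'Rx w' hR2]
        have hd := (hdRx w' hR2).2
        have h5 := hp3 w' hR2
        omega
      · rw [hg'y, hg'Ry w' hR2]
        have hd := (hdRy w' hR2).1
        have h5 := hp4 w' hR2
        omega
      -- w ∈ T
      · obtain ⟨he, hlo, hhi⟩ := hg'T w hT1
        have hd : G.dist w w' = 1 := by rw [SimpleGraph.dist_comm]; exact (hdT w hT1).1
        rw [hg'x]; omega
      · obtain ⟨he, hlo, hhi⟩ := hg'T w hT1
        have hd : G.dist w w' = 1 := by rw [SimpleGraph.dist_comm]; exact (hdT w hT1).2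
        rw [hg'y]; omega
      · obtain ⟨he, -, -⟩ := hg'T w hT1
        obtain ⟨he', -, -⟩ := hg'T w' hT2
        have hlip2 := hgL w (Or.inl hT1) w' (Or.inl hT2)
        rw [he, he']
        exact clamp_lip p (g w) (g w') _ hlip2 hd0
      · -- T vs Rx
        obtain ⟨he, -, -⟩ := hg'T w hT1
        have hlip2 := hgL w (Or.inl hT1) w' (Or.inr (Or.inl hR2))
        have hne : w ≠ w' := fun h => (hRxmem w' hR2).2.1 (h ▸ (hTmem w hT1).2.1)
        have hD := dist_pos_ne (G := G) hconn hne
        have h5 := hp3 w' hR2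
        rw [he, hg'Rx w' hR2]
        exact clamp_mix1 p (g w) (g w') _ hlip2 (by omega) (by exact_mod_cast hD)
      · -- T vs Ry
        obtain ⟨he, -, -⟩ := hg'T w hT1
        have hlip2 := hgL w (Or.inl hT1) w' (Or.inr (Or.inr hR2))
        have hne : w ≠ w' := fun h => (hRymem w' hR2).2.1 (h ▸ (hTmem w hT1).1)
        have hD := dist_pos_ne (G := G) hconn hne
        have h5 := hp4 w' hR2
        rw [he, hg'Ry w' hR2]
        exact clamp_mix2 p (g w) (g w') _ hlip2 (by omega) (by exact_mod_cast hD)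
      -- w ∈ Rx
      · rw [hg'Rx w hR1, hg'x]
        have hd : G.dist w w' = 1 := by rw [SimpleGraph.dist_comm]; exact (hdRx w hR1).1
        have h5 := hp1 w hR1
        omega
      · rw [hg'Rx w hR1, hg'y]
        have hd : G.dist w w' = 2 := by rw [SimpleGraph.dist_comm]; exact (hdRx w hR1).2
        have h5 := hp1 w hR1
        omega
      · -- Rx vs T
        obtain ⟨he, -, -⟩ := hg'T w' hT2
        have hlip2 := hgL w (Or.inr (Or.inl hR1)) w' (Or.inl hT2)
        have hne : w ≠ w' := fun h => (hRxmem w hR1).2.1 (h.symm ▸ (hTmem w' hT2).2.1)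
        have hD := dist_pos_ne (G := G) hconn hne
        have h5 := hp1 w hR1
        rw [hg'Rx w hR1, he]
        exact clamp_mix3 p (g w') (g w) _ hlip2 (by omega) (by exact_mod_cast hD)
      · rw [hg'Rx w hR1, hg'Rx w' hR2]
        exact hgL w (Or.inr (Or.inl hR1)) w' (Or.inr (Or.inl hR2))
      · rw [hg'Rx w hR1, hg'Ry w' hR2]
        exact hgL w (Or.inr (Or.inl hR1)) w' (Or.inr (Or.inr hR2))
      -- w ∈ Ry
      · rw [hg'Ry w hR1, hg'x]
        have h5 := hp2 w hR1
        omega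
      · rw [hg'Ry w hR1, hg'y]
        have hd : G.dist w w' = 1 := by rw [SimpleGraph.dist_comm]; exact (hdRy w hR1).1
        have h5 := hp2 w hR1
        omega
      · -- Ry vs T
        obtain ⟨he, hlo, hhi⟩ := hg'T w' hT2
        have hne : w ≠ w' := fun h => (hRymem w hR1).2.1 (h.symm ▸ (hTmem w' hT2).1)
        have hD := dist_pos_ne (G := G) hconn hne
        have h5 := hp2 w hR1
        rw [hg'Ry w hR1]
        omega
      · rw [hg'Ry w hR1, hg'Rx w' hR2]
        exact hgL w (Or.inr (Or.inr hR1)) w' (Or.inr (Or.inl hR2))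
      · rw [hg'Ry w hR1, hg'Ry w' hR2]
        exact hgL w (Or.inr (Or.inr hR1)) w' (Or.inr (Or.inr hR2))
    -- sums
    have e5 : ∑ z ∈ A, g z = ∑ z ∈ T, g z + ∑ z ∈ Rx, g z := by
      rw [← hAeq, Finset.sum_union hdisjTRx]
    have e6 : ∑ z ∈ B, g z = ∑ z ∈ T, g z + ∑ z ∈ Ry, g z := by
      rw [← hBeq, Finset.sum_union hdisjTRy]
    have hsum' : (∑ a ∈ Nx, g' a) - (∑ b ∈ Ny, g' b) = (Cmin G A B : ℤ) - 1 := by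
      have e1 : ∑ a ∈ Nx, g' a = g' y + ∑ z ∈ A, g' z := (Finset.add_sum_erase Nx g' hyNx).symm
      have e2 : ∑ b ∈ Ny, g' b = g' x + ∑ z ∈ B, g' z := (Finset.add_sum_erase Ny g' hxNy).symm
      have e3 : ∑ z ∈ A, g' z = ∑ z ∈ T, g' z + ∑ z ∈ Rx, g z := by
        rw [← hAeq, Finset.sum_union hdisjTRx]
        congr 1
        exact Finset.sum_congr rfl hg'Rx
      have e4 : ∑ z ∈ B, g' z = ∑ z ∈ T, g' z + ∑ z ∈ Ry, g z := by
        rw [← hBeq, Finset.sum_union hdisjTRy]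
        congr 1
        exact Finset.sum_congr rfl hg'Ry
      have e7 : (∑ z ∈ Rx, g z) - (∑ z ∈ Ry, g z) = (Cmin G A B : ℤ) := by
        rw [e5, e6] at hgsum; omega
      rw [e1, e2, e3, e4, hg'x, hg'y]
      omega
    have hUne : U.Nonempty := ⟨x, Finset.mem_insert_self _ _⟩
    obtain ⟨f, hfLip, hfU⟩ := mcshane hconn hUne g' hLipU
    have hxU : x ∈ U := Finset.mem_insert_self _ _
    have hyU : y ∈ U := Finset.mem_insert.mpr (Or.inr (Finset.mem_insert_self _ _))
    have hNxU : ∀ a ∈ Nx, a ∈ U := fun a ha =>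
      Finset.mem_insert.mpr (Or.inr (Finset.mem_insert.mpr (Or.inr
        (Finset.mem_union_left _ ha))))
    have hNyU : ∀ b ∈ Ny, b ∈ U := fun b hb =>
      Finset.mem_insert.mpr (Or.inr (Finset.mem_insert.mpr (Or.inr
        (Finset.mem_union_right _ hb))))
    refine ⟨f, hfLip, ?_, ?_⟩
    · rw [hfU x hxU, hfU y hyU, hg'x, hg'y]; omega
    · rw [Finset.sum_congr rfl (fun a ha => hfU a (hNxU a ha)),
        Finset.sum_congr rfl (fun b hb => hfU b (hNyU b hb))]
      exact hsum'

end Setting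

section Analysis

open OllivierRicci

variable {V : Type*} {G : SimpleGraph V}

/-- single-map transport plan -/
def mapPlan (S : Finset V) (m : V → V) (w : ℝ) : V → V → ℝ :=
  fun a b => if a ∈ S ∧ b = m a then w else 0

lemma mapPlan_row (S : Finset V) (m : V → V) (w : ℝ) (a : V) :
    HasSum (fun b => mapPlan S m w a b) (if a ∈ S then w else 0) := by
  by_cases ha : a ∈ S
  · simp only [mapPlan, ha, true_and, if_pos]
    exact hasSum_ite_eq (m a) w
  · simp only [mapPlan, ha, false_and, if_neg, not_false_iff, if_false]
    exact hasSum_zero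

lemma mapPlan_col (S : Finset V) (m : V → V) (w : ℝ) (hinj : Set.InjOn m ↑S) (b : V) :
    HasSum (fun a => mapPlan S m w a b)
      (if ∃ a ∈ S, m a = b then w else 0) := by
  have hsupp : ∀ a ∉ S, mapPlan S m w a b = 0 := by
    intro a ha
    simp [mapPlan, ha]
  have := hasSum_sum_of_ne_finset_zero (s := S) (L := SummationFilter.unconditional V) hsupp
  convert this using 1
  by_cases hex : ∃ a ∈ S, m a = b
  · obtain ⟨a0, ha0, hm0⟩ := hex
    rw [if_pos ⟨a0, ha0, hm0⟩]
    rw [Finset.sum_eq_single a0]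
    · simp [mapPlan, ha0, hm0.symm]
    · intro a ha hne
      simp only [mapPlan, ha, true_and]
      rw [if_neg]
      intro hc
      exact hne (hinj ha ha0 (by rw [hm0, ← hc]))
    · intro hc; exact absurd ha0 hc
  · rw [if_neg hex]
    refine (Finset.sum_eq_zero ?_).symm
    intro a ha
    simp only [mapPlan, ha, true_and]
    rw [if_neg]
    intro hc
    exact hex ⟨a, ha, hc.symm⟩

lemma twoPlan_isPlan (S1 S2 : Finset V) (m1 m2 : V → V) (w1 w2 : ℝ)
    (h1 : Set.InjOn m1 ↑S1) (h2 : Set.InjOn m2 ↑S2)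
    (hw1 : 0 ≤ w1) (hw2 : 0 ≤ w2)
    {μ1 μ2 : V → ℝ}
    (hrow : ∀ a, μ1 a = (if a ∈ S1 then w1 else 0) + (if a ∈ S2 then w2 else 0))
    (hcol : ∀ b, μ2 b = (if ∃ a ∈ S1, m1 a = b then w1 else 0) +
      (if ∃ a ∈ S2, m2 a = b then w2 else 0)) :
    IsPlan μ1 μ2 (fun a b => mapPlan S1 m1 w1 a b + mapPlan S2 m2 w2 a b) := by
  refine ⟨?_, ?_, ?_⟩
  · intro a b
    have e1 : (0:ℝ) ≤ mapPlan S1 m1 w1 a b := by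
      simp only [mapPlan]; split <;> simp [hw1]
    have e2 : (0:ℝ) ≤ mapPlan S2 m2 w2 a b := by
      simp only [mapPlan]; split <;> simp [hw2]
    positivity
  · intro a
    rw [hrow a]
    exact (mapPlan_row S1 m1 w1 a).add (mapPlan_row S2 m2 w2 a)
  · intro b
    rw [hcol b]
    exact (mapPlan_col S1 m1 w1 h1 b).add (mapPlan_col S2 m2 w2 h2 b)

lemma twoPlan_cost (G : SimpleGraph V) (S1 S2 : Finset V) (m1 m2 : V → V) (w1 w2 : ℝ) :
    cost G (fun a b => mapPlan S1 m1 w1 a b + mapPlan S2 m2 w2 a b) =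
      (∑ a ∈ S1, (G.dist a (m1 a) : ℝ) * w1) + (∑ a ∈ S2, (G.dist a (m2 a) : ℝ) * w2) := by
  have key : ∀ (S : Finset V) (m : V → V) (w : ℝ),
      (∑' p : V × V, (G.dist p.1 p.2 : ℝ) * mapPlan S m w p.1 p.2)
        = ∑ a ∈ S, (G.dist a (m a) : ℝ) * w := by
    intro S m w
    have hsupp : ∀ p : V × V, p ∉ S.image (fun a => (a, m a)) →
        (G.dist p.1 p.2 : ℝ) * mapPlan S m w p.1 p.2 = 0 := by
      rintro ⟨a, b⟩ hp
      simp only [Finset.mem_image, Prod.mk.injEq, not_exists] at hp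
      simp only [mapPlan]
      rw [if_neg, mul_zero]
      rintro ⟨ha, rfl⟩
      exact hp a ⟨ha, rfl, rfl⟩
    rw [tsum_eq_sum hsupp, Finset.sum_image (by
      intro a _ b _ h
      exact (Prod.mk.injEq _ _ _ _).mp h |>.1)]
    refine Finset.sum_congr rfl fun a ha => ?_
    simp [mapPlan, ha]
  have hsum1 : Summable (fun p : V × V => (G.dist p.1 p.2 : ℝ) * mapPlan S1 m1 w1 p.1 p.2) := by
    apply summable_of_ne_finset_zero (s := S1.image (fun a => (a, m1 a)))
    rintro ⟨a, b⟩ hp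
    simp only [Finset.mem_image, Prod.mk.injEq, not_exists] at hp
    simp only [mapPlan]
    rw [if_neg, mul_zero]
    rintro ⟨ha, rfl⟩
    exact hp a ⟨ha, rfl, rfl⟩
  have hsum2 : Summable (fun p : V × V => (G.dist p.1 p.2 : ℝ) * mapPlan S2 m2 w2 p.1 p.2) := by
    apply summable_of_ne_finset_zero (s := S2.image (fun a => (a, m2 a)))
    rintro ⟨a, b⟩ hp
    simp only [Finset.mem_image, Prod.mk.injEq, not_exists] at hp
    simp only [mapPlan]
    rw [if_neg, mul_zero]
    rintro ⟨ha, rfl⟩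
    exact hp a ⟨ha, rfl, rfl⟩
  have : cost G (fun a b => mapPlan S1 m1 w1 a b + mapPlan S2 m2 w2 a b)
      = (∑' p : V × V, (G.dist p.1 p.2 : ℝ) * mapPlan S1 m1 w1 p.1 p.2)
        + (∑' p : V × V, (G.dist p.1 p.2 : ℝ) * mapPlan S2 m2 w2 p.1 p.2) := by
    rw [cost, ← Summable.tsum_add hsum1 hsum2]
    congr 1
    ext p
    ring
  rw [this, key, key]

lemma W1_eq (G : SimpleGraph V) {μ1 μ2 : V → ℝ} (Sx Sy : Finset V)
    (hμ1 : ∀ a, a ∉ Sx → μ1 a = 0) (hμ2 : ∀ b, b ∉ Sy → μ2 b = 0)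
    (L : ℝ)
    (upper : ∃ π : V → V → ℝ, IsPlan μ1 μ2 π ∧ cost G π = L)
    (f : V → ℤ) (hLip : ∀ w w' : V, f w - f w' ≤ (G.dist w w' : ℤ))
    (hdual : (∑ a ∈ Sx, (f a : ℝ) * μ1 a) - (∑ b ∈ Sy, (f b : ℝ) * μ2 b) = L) :
    W1 G μ1 μ2 = L := by
  have hbdd : BddBelow {c : ℝ | ∃ π : V → V → ℝ, IsPlan μ1 μ2 π ∧ cost G π = c} := by
    refine ⟨0, ?_⟩
    rintro c ⟨π, hπ, rfl⟩
    exact tsum_nonneg fun p => mul_nonneg (by positivity) (hπ.1 _ _)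
  apply le_antisymm
  · obtain ⟨π, hπ, hc⟩ := upper
    exact csInf_le hbdd ⟨π, hπ, hc⟩
  · apply le_csInf
    · obtain ⟨π, hπ, hc⟩ := upper
      exact ⟨L, π, hπ, hc⟩
    rintro c ⟨π, hπ, rfl⟩
    obtain ⟨hpos, hrow, hcol⟩ := hπ
    -- support of the plan
    have hsupp : ∀ a b, (a ∉ Sx ∨ b ∉ Sy) → π a b = 0 := by
      intro a b hab
      rcases hab with ha | hb
      · have h0 : μ1 a = 0 := hμ1 a ha
        have hub : π a b ≤ μ1 a := le_hasSum (hrow a) b (fun j _ => hpos a j)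
        have := hpos a b
        linarith [hub, h0.symm ▸ hub]
      · have h0 : μ2 b = 0 := hμ2 b hb
        have hub : π a b ≤ μ2 b := le_hasSum (hcol b) a (fun j _ => hpos j b)
        have := hpos a b
        linarith [hub, h0.symm ▸ hub]
    -- cost as a finite double sum
    have hcost : cost G π = ∑ a ∈ Sx, ∑ b ∈ Sy, (G.dist a b : ℝ) * π a b := by
      rw [cost, tsum_eq_sum (s := Sx ×ˢ Sy) ?_, Finset.sum_product]
      rintro ⟨a, b⟩ hp
      rw [Finset.mem_product] at hp
      rw [not_and_or] at hp
      rw [hsupp a b hp, mul_zero]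
    -- marginals as finite sums
    have hμ1eq : ∀ a, μ1 a = ∑ b ∈ Sy, π a b := by
      intro a
      refine (hrow a).unique (hasSum_sum_of_ne_finset_zero ?_)
      intro b hb
      exact hsupp a b (Or.inr hb)
    have hμ2eq : ∀ b, μ2 b = ∑ a ∈ Sx, π a b := by
      intro b
      refine (hcol b).unique (hasSum_sum_of_ne_finset_zero ?_)
      intro a ha
      exact hsupp a b (Or.inl ha)
    have hstep : (∑ a ∈ Sx, (f a : ℝ) * μ1 a) - (∑ b ∈ Sy, (f b : ℝ) * μ2 b)
        = ∑ a ∈ Sx, ∑ b ∈ Sy, ((f a : ℝ) - (f b : ℝ)) * π a b := by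
      have e1 : ∑ a ∈ Sx, (f a : ℝ) * μ1 a = ∑ a ∈ Sx, ∑ b ∈ Sy, (f a : ℝ) * π a b := by
        refine Finset.sum_congr rfl fun a _ => ?_
        rw [hμ1eq a, Finset.mul_sum]
      have e2 : ∑ b ∈ Sy, (f b : ℝ) * μ2 b = ∑ a ∈ Sx, ∑ b ∈ Sy, (f b : ℝ) * π a b := by
        rw [Finset.sum_comm]
        refine Finset.sum_congr rfl fun b _ => ?_
        rw [hμ2eq b, Finset.mul_sum]
      rw [e1, e2, ← Finset.sum_sub_distrib]
      refine Finset.sum_congr rfl fun a _ => ?_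
      rw [← Finset.sum_sub_distrib]
      refine Finset.sum_congr rfl fun b _ => ?_
      ring
    rw [← hdual, hstep, hcost]
    refine Finset.sum_le_sum fun a _ => Finset.sum_le_sum fun b _ => ?_
    apply mul_le_mul_of_nonneg_right _ (hpos a b)
    have := hLip a b
    exact_mod_cast this

lemma mu_eval [inst : ∀ v : V, Fintype (G.neighborSet v)] {x : V} {d : ℕ}
    (hdx : (G.neighborFinset x).card = d) (α : ℝ) (a : V) :
    mu G α x a = if a = x then α else if a ∈ G.neighborFinset x then (1-α)/(d:ℝ) else 0 := by
  have hn : ((G.neighborSet x).ncard : ℝ) = (d : ℝ) := by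
    rw [Set.ncard_eq_toFinset_card']
    norm_cast
  simp only [mu, hn, SimpleGraph.mem_neighborFinset]

lemma sum_cast_dist (G : SimpleGraph V) (S : Finset V) (m : V → V) :
    ∑ a ∈ S, (G.dist a (m a) : ℝ) = ((mcost G S m : ℕ) : ℝ) := by
  rw [mcost]
  push_cast
  rfl

lemma W1_mu_alpha [inst : ∀ v : V, Fintype (G.neighborSet v)]
    (hconn : G.Connected) {x y : V} (hadj : G.Adj x y) {d : ℕ}
    (hdx : (G.neighborFinset x).card = d) (hdy : (G.neighborFinset y).card = d)
    {α : ℝ} (hα1 : α ≤ 1) (hαd : (1 - α) / d ≤ α) :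
    W1 G (mu G α x) (mu G α y) = α - (1-α)/(d:ℝ) + (1-α) *
      (Cmin G ((G.neighborFinset x).erase y) ((G.neighborFinset y).erase x) : ℝ) / d := by
  classical
  have hxy : x ≠ y := hadj.ne
  set Nx := G.neighborFinset x with hNxdef
  set Ny := G.neighborFinset y with hNydef
  set A := Nx.erase y with hA
  set B := Ny.erase x with hB
  have hyNx : y ∈ Nx := y_mem_Nx hadj
  have hxNy : x ∈ Ny := x_mem_Ny hadj
  have hxNx : x ∉ Nx := by simp [hNxdef]
  have hyNy : y ∉ Ny := by simp [hNydef]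
  have hd1 : 1 ≤ d := by
    rw [← hdx]
    exact Finset.card_pos.mpr ⟨y, hyNx⟩
  have hdR : (0:ℝ) < (d:ℝ) := by exact_mod_cast hd1
  have hcard : Nx.card = Ny.card := by rw [hdx, hdy]
  have hAB : A.card = B.card := erase_card_eq hadj hcard
  obtain ⟨ψ, hψbij, hψcost⟩ := Cmin_spec (G := G) hAB
  obtain ⟨f, hfLip, hfδ, hfsum⟩ := certA hconn hadj hcard
  set CN := Cmin G A B with hCN
  set w1 : ℝ := (1-α)/(d:ℝ) with hw1
  set w2 : ℝ := α - (1-α)/(d:ℝ) with hw2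
  have hw1pos : 0 ≤ w1 := by
    apply div_nonneg (by linarith) (le_of_lt hdR)
  have hw2pos : 0 ≤ w2 := by rw [hw2]; linarith [hαd]
  set m1 : V → V := fun a => if a = x then x else if a = y then y else ψ a with hm1
  set S1 : Finset V := insert x Nx with hS1
  have hm1x : m1 x = x := by simp [hm1]
  have hm1y : m1 y = y := by simp [hm1, hxy.symm]
  have hm1A : ∀ a ∈ A, m1 a = ψ a := by
    intro a ha
    obtain ⟨hay, haNx⟩ := Finset.mem_erase.mp ha
    have hax : a ≠ x := fun h => hxNx (h ▸ haNx)
    simp [hm1, hax, hay]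
  have hψB : ∀ a ∈ A, ψ a ∈ B := fun a ha => hψbij.mapsTo ha
  have hm1inj : Set.InjOn m1 ↑S1 := by
    intro a ha b hb hab
    simp only [hS1, Finset.coe_insert, Set.mem_insert_iff, Finset.mem_coe] at ha hb
    have hcases : ∀ c, c = x ∨ c ∈ Nx → m1 c = x ∧ c = x ∨ (m1 c = y ∧ c = y) ∨ (∃ hc : c ∈ A, m1 c = ψ c) := by
      intro c hc
      rcases hc with rfl | hc
      · exact Or.inl ⟨hm1x, rfl⟩
      · by_cases hcy : c = y
        · subst hcy; exact Or.inr (Or.inl ⟨hm1y, rfl⟩)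
        · exact Or.inr (Or.inr ⟨Finset.mem_erase.mpr ⟨hcy, hc⟩, hm1A c (Finset.mem_erase.mpr ⟨hcy, hc⟩)⟩)
    rcases hcases a ha with ⟨e1, rfl⟩ | ⟨e1, rfl⟩ | ⟨hA1, e1⟩ <;>
      rcases hcases b hb with ⟨e2, rfl⟩ | ⟨e2, rfl⟩ | ⟨hA2, e2⟩
    · rfl
    · rw [e1, e2] at hab; exact hab
    · exfalso; rw [e1, e2] at hab
      exact (Finset.mem_erase.mp (hψB b hA2)).1 hab.symm
    · rw [e1, e2] at hab; exact hab
    · rfl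
    · exfalso; rw [e1, e2] at hab
      have := hψB b hA2
      rw [← hab] at this
      exact hyNy (Finset.mem_of_mem_erase this)
    · exfalso; rw [e1, e2] at hab
      exact (Finset.mem_erase.mp (hψB a hA1)).1 hab
    · exfalso; rw [e1, e2] at hab
      have := hψB a hA1
      rw [hab] at this
      exact hyNy (Finset.mem_of_mem_erase this)
    · rw [e1, e2] at hab
      exact hψbij.injOn hA1 hA2 hab
  have hm2inj : Set.InjOn (fun _ : V => y) ↑({x} : Finset V) := by
    intro a ha b hb _
    simp only [Finset.coe_singleton, Set.mem_singleton_iff] at ha hb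
    rw [ha, hb]
  -- row marginal
  have hrow : ∀ a, mu G α x a =
      (if a ∈ S1 then w1 else 0) + (if a ∈ ({x} : Finset V) then w2 else 0) := by
    intro a
    rw [mu_eval hdx]
    by_cases hax : a = x
    · rw [if_pos hax, if_pos (by rw [hax]; exact Finset.mem_insert_self _ _),
        if_pos (by rw [hax]; exact Finset.mem_singleton_self x)]
      rw [hw1, hw2]; ring
    · have : a ∉ ({x} : Finset V) := by simp [hax]
      rw [if_neg hax, if_neg this, add_zero]
      by_cases haNx : a ∈ Nx
      · rw [if_pos haNx, if_pos (Finset.mem_insert.mpr (Or.inr haNx))]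
      · rw [if_neg haNx, if_neg (by
          intro hc
          rcases Finset.mem_insert.mp hc with h | h
          exacts [hax h, haNx h])]
  -- column marginal
  have hNyins : insert x B = Ny := Finset.insert_erase hxNy
  have hex1 : ∀ b, (∃ a ∈ S1, m1 a = b) ↔ (b = x ∨ b = y ∨ b ∈ B) := by
    intro b
    constructor
    · rintro ⟨a, ha, rfl⟩
      rcases Finset.mem_insert.mp ha with rfl | haNx
      · exact Or.inl hm1x
      · by_cases hay : a = y
        · subst hay; exact Or.inr (Or.inl hm1y)
        · have haA : a ∈ A := Finset.mem_erase.mpr ⟨hay, haNx⟩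
          rw [hm1A a haA]
          exact Or.inr (Or.inr (hψB a haA))
    · rintro (rfl | rfl | hbB)
      · exact ⟨b, Finset.mem_insert_self _ _, hm1x⟩
      · exact ⟨b, Finset.mem_insert.mpr (Or.inr hyNx), hm1y⟩
      · obtain ⟨a, haA, rfl⟩ := hψbij.surjOn hbB
        exact ⟨a, Finset.mem_insert.mpr (Or.inr (Finset.mem_of_mem_erase haA)),
          hm1A a haA⟩
  have hcol : ∀ b, mu G α y b =
      (if ∃ a ∈ S1, m1 a = b then w1 else 0) +
      (if ∃ a ∈ ({x} : Finset V), (fun _ => y) a = b then w2 else 0) := by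
    intro b
    rw [mu_eval hdy]
    have hex2 : (∃ a ∈ ({x} : Finset V), (fun _ => y) a = b) ↔ b = y := by
      simp [eq_comm]
    by_cases hby : b = y
    · subst hby
      rw [if_pos rfl, if_pos ((hex1 b).mpr (Or.inr (Or.inl rfl))), if_pos (hex2.mpr rfl)]
      rw [hw1, hw2]; ring
    · rw [if_neg hby, if_neg (fun hc => hby (hex2.mp hc)), add_zero]
      by_cases hbNy : b ∈ Ny
      · rw [if_pos hbNy]
        have : b = x ∨ b ∈ B := by
          rcases Finset.mem_insert.mp (hNyins ▸ hbNy) with h | h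
          exacts [Or.inl h, Or.inr h]
        rw [if_pos ((hex1 b).mpr (by tauto))]
      · rw [if_neg hbNy, if_neg]
        intro hc
        rcases (hex1 b).mp hc with rfl | rfl | hbB
        · exact hbNy hxNy
        · exact hby rfl
        · exact hbNy (Finset.mem_of_mem_erase hbB)
  have hplan := twoPlan_isPlan S1 {x} m1 (fun _ => y) w1 w2 hm1inj hm2inj hw1pos hw2pos hrow hcol
  have hcost := twoPlan_cost G S1 ({x} : Finset V) m1 (fun _ => y) w1 w2
  -- evaluate the cost
  have hsum1 : ∑ a ∈ S1, (G.dist a (m1 a) : ℝ) = (CN : ℝ) := by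
    rw [hS1, Finset.sum_insert hxNx]
    have e0 : (G.dist x (m1 x) : ℝ) = 0 := by rw [hm1x]; simp
    have e1 : ∑ a ∈ Nx, (G.dist a (m1 a) : ℝ)
        = (G.dist y (m1 y) : ℝ) + ∑ a ∈ A, (G.dist a (m1 a) : ℝ) :=
      (Finset.add_sum_erase Nx (fun a => (G.dist a (m1 a) : ℝ)) hyNx).symm
    have e2 : (G.dist y (m1 y) : ℝ) = 0 := by rw [hm1y]; simp
    have e3 : ∑ a ∈ A, (G.dist a (m1 a) : ℝ) = (CN : ℝ) := by
      rw [Finset.sum_congr rfl (fun a ha => by rw [hm1A a ha]), sum_cast_dist, hψcost]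
    rw [e0, e1, e2, e3, zero_add, zero_add]
  have hcostL : cost G (fun a b => mapPlan S1 m1 w1 a b + mapPlan ({x} : Finset V) (fun _ => y) w2 a b)
      = α - (1-α)/(d:ℝ) + (1-α) * (CN : ℝ) / d := by
    rw [hcost, ← Finset.sum_mul, ← Finset.sum_mul, hsum1]
    have hsx : ∑ a ∈ ({x} : Finset V), (G.dist a ((fun _ => y) a) : ℝ) = 1 := by
      rw [Finset.sum_singleton]
      have hh : G.dist x y = 1 := SimpleGraph.dist_eq_one_iff_adj.mpr hadj
      rw [hh]; norm_num
    rw [hsx, hw1, hw2]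
    ring
  -- dual value
  apply W1_eq G (insert x Nx) (insert y Ny)
  · intro a ha
    rw [mu_eval hdx]
    have h1 : ¬ a = x := fun h => ha (by rw [h]; exact Finset.mem_insert_self _ _)
    have h2 : a ∉ G.neighborFinset x := fun h => ha (Finset.mem_insert.mpr (Or.inr h))
    rw [if_neg h1, if_neg h2]
  · intro b hb
    rw [mu_eval hdy]
    have h1 : ¬ b = y := fun h => hb (by rw [h]; exact Finset.mem_insert_self _ _)
    have h2 : b ∉ G.neighborFinset y := fun h => hb (Finset.mem_insert.mpr (Or.inr h))
    rw [if_neg h1, if_neg h2]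
  · exact ⟨_, hplan, hcostL⟩
  · exact hfLip
  · -- dual computation
    have hmux : ∀ a ∈ Nx, mu G α x a = w1 := by
      intro a ha
      have h1 : ¬ a = x := fun h => hxNx (by rw [← h]; exact ha)
      rw [mu_eval hdx, if_neg h1, if_pos ha]
    have hmuy : ∀ b ∈ Ny, mu G α y b = w1 := by
      intro b hb
      have h1 : ¬ b = y := fun h => hyNy (by rw [← h]; exact hb)
      rw [mu_eval hdy, if_neg h1, if_pos hb]
    have e1 : ∑ a ∈ insert x Nx, (f a : ℝ) * mu G α x a
        = (f x : ℝ) * α + ∑ a ∈ Nx, (f a : ℝ) * w1 := by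
      rw [Finset.sum_insert hxNx]
      congr 1
      · rw [mu_eval hdx, if_pos rfl]
      · exact Finset.sum_congr rfl fun a ha => by rw [hmux a ha]
    have e2 : ∑ b ∈ insert y Ny, (f b : ℝ) * mu G α y b
        = (f y : ℝ) * α + ∑ b ∈ Ny, (f b : ℝ) * w1 := by
      rw [Finset.sum_insert hyNy]
      congr 1
      · rw [mu_eval hdy, if_pos rfl]
      · exact Finset.sum_congr rfl fun b hb => by rw [hmuy b hb]
    rw [e1, e2]
    have e3 : ∑ a ∈ Nx, (f a : ℝ) * w1 - ∑ b ∈ Ny, (f b : ℝ) * w1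
        = ((CN : ℝ) - 1) * w1 := by
      rw [← Finset.sum_mul, ← Finset.sum_mul, ← sub_mul]
      congr 1
      have : ((∑ a ∈ Nx, f a : ℤ) : ℝ) - ((∑ b ∈ Ny, f b : ℤ) : ℝ) = ((CN : ℝ) - 1) := by
        rw [← Int.cast_sub, hfsum]
        push_cast
        ring
      push_cast at this ⊢
      linarith [this]
    have e4 : ((f x : ℝ) - (f y : ℝ)) = 1 := by
      have : ((f x - f y : ℤ) : ℝ) = 1 := by rw [hfδ]; norm_num
      push_cast at this
      linarith
    have expand : (f x : ℝ) * α + ∑ a ∈ Nx, (f a : ℝ) * w1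
        - ((f y : ℝ) * α + ∑ b ∈ Ny, (f b : ℝ) * w1)
        = α * ((f x : ℝ) - (f y : ℝ)) + (∑ a ∈ Nx, (f a : ℝ) * w1 - ∑ b ∈ Ny, (f b : ℝ) * w1) := by
      ring
    rw [expand, e3, e4, hw1]
    ring

lemma W1_mu_zero [inst : ∀ v : V, Fintype (G.neighborSet v)]
    (hconn : G.Connected) {x y : V} (hadj : G.Adj x y) {d : ℕ}
    (hdx : (G.neighborFinset x).card = d) (hdy : (G.neighborFinset y).card = d) :
    W1 G (mu G 0 x) (mu G 0 y)
      = (Cmin G (G.neighborFinset x) (G.neighborFinset y) : ℝ) / d := by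
  classical
  have hxy : x ≠ y := hadj.ne
  set Nx := G.neighborFinset x with hNxdef
  set Ny := G.neighborFinset y with hNydef
  have hyNx : y ∈ Nx := y_mem_Nx hadj
  have hxNy : x ∈ Ny := x_mem_Ny hadj
  have hxNx : x ∉ Nx := by simp [hNxdef]
  have hyNy : y ∉ Ny := by simp [hNydef]
  have hd1 : 1 ≤ d := by
    rw [← hdx]
    exact Finset.card_pos.mpr ⟨y, hyNx⟩
  have hdR : (0:ℝ) < (d:ℝ) := by exact_mod_cast hd1
  have hcard : Nx.card = Ny.card := by rw [hdx, hdy]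
  obtain ⟨ψ, hψbij, hψcost⟩ := Cmin_spec (G := G) hcard
  obtain ⟨f, hfLip, hfsum⟩ := cert0 hconn hadj hcard
  set Cp := Cmin G Nx Ny with hCp
  set w1 : ℝ := 1/(d:ℝ) with hw1
  have hw1pos : 0 ≤ w1 := by positivity
  have hm2inj : Set.InjOn (fun _ : V => y) ↑({x} : Finset V) := by
    intro a ha b hb _
    simp only [Finset.coe_singleton, Set.mem_singleton_iff] at ha hb
    rw [ha, hb]
  have hrow : ∀ a, mu G 0 x a =
      (if a ∈ Nx then w1 else 0) + (if a ∈ ({x} : Finset V) then (0:ℝ) else 0) := by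
    intro a
    rw [mu_eval hdx, ite_self, add_zero]
    by_cases hax : a = x
    · rw [if_pos hax, if_neg (by rw [hax]; exact hxNx)]
    · rw [if_neg hax]
      by_cases haNx : a ∈ Nx
      · rw [if_pos haNx, if_pos haNx]
        rw [hw1]; norm_num
      · rw [if_neg haNx, if_neg haNx]
  have hex1 : ∀ b, (∃ a ∈ Nx, ψ a = b) ↔ b ∈ Ny := by
    intro b
    constructor
    · rintro ⟨a, ha, rfl⟩
      exact hψbij.mapsTo ha
    · intro hb
      obtain ⟨a, ha, rfl⟩ := hψbij.surjOn hb
      exact ⟨a, ha, rfl⟩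
  have hcol : ∀ b, mu G 0 y b =
      (if ∃ a ∈ Nx, ψ a = b then w1 else 0) +
      (if ∃ a ∈ ({x} : Finset V), (fun _ => y) a = b then (0:ℝ) else 0) := by
    intro b
    rw [mu_eval hdy, ite_self, add_zero]
    by_cases hby : b = y
    · rw [if_pos hby, if_neg (by rw [hby]; rw [hex1]; exact hyNy)]
    · rw [if_neg hby]
      by_cases hbNy : b ∈ Ny
      · rw [if_pos hbNy, if_pos ((hex1 b).mpr hbNy)]
        rw [hw1]; norm_num
      · rw [if_neg hbNy, if_neg (fun hc => hbNy ((hex1 b).mp hc))]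
  have hplan := twoPlan_isPlan Nx ({x} : Finset V) ψ (fun _ => y) w1 0
    hψbij.injOn hm2inj hw1pos le_rfl hrow hcol
  have hcost := twoPlan_cost G Nx ({x} : Finset V) ψ (fun _ => y) w1 0
  have hcostL : cost G (fun a b => mapPlan Nx ψ w1 a b + mapPlan ({x} : Finset V) (fun _ => y) 0 a b)
      = (Cp : ℝ) / d := by
    rw [hcost, ← Finset.sum_mul, ← Finset.sum_mul, sum_cast_dist, hψcost]
    rw [hw1]
    simp
    ring
  apply W1_eq G (insert x Nx) (insert y Ny)
  · intro a ha
    rw [mu_eval hdx]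
    have h1 : ¬ a = x := fun h => ha (by rw [h]; exact Finset.mem_insert_self _ _)
    have h2 : a ∉ G.neighborFinset x := fun h => ha (Finset.mem_insert.mpr (Or.inr h))
    rw [if_neg h1, if_neg h2]
  · intro b hb
    rw [mu_eval hdy]
    have h1 : ¬ b = y := fun h => hb (by rw [h]; exact Finset.mem_insert_self _ _)
    have h2 : b ∉ G.neighborFinset y := fun h => hb (Finset.mem_insert.mpr (Or.inr h))
    rw [if_neg h1, if_neg h2]
  · exact ⟨_, hplan, hcostL⟩
  · exact hfLip
  · have hmux : ∀ a ∈ Nx, mu G 0 x a = w1 := by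
      intro a ha
      have h1 : ¬ a = x := fun h => hxNx (by rw [← h]; exact ha)
      rw [mu_eval hdx, if_neg h1, if_pos ha]
      rw [hw1]; norm_num
    have hmuy : ∀ b ∈ Ny, mu G 0 y b = w1 := by
      intro b hb
      have h1 : ¬ b = y := fun h => hyNy (by rw [← h]; exact hb)
      rw [mu_eval hdy, if_neg h1, if_pos hb]
      rw [hw1]; norm_num
    have e1 : ∑ a ∈ insert x Nx, (f a : ℝ) * mu G 0 x a
        = (f x : ℝ) * 0 + ∑ a ∈ Nx, (f a : ℝ) * w1 := by
      rw [Finset.sum_insert hxNx]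
      congr 1
      · rw [mu_eval hdx, if_pos rfl]
      · exact Finset.sum_congr rfl fun a ha => by rw [hmux a ha]
    have e2 : ∑ b ∈ insert y Ny, (f b : ℝ) * mu G 0 y b
        = (f y : ℝ) * 0 + ∑ b ∈ Ny, (f b : ℝ) * w1 := by
      rw [Finset.sum_insert hyNy]
      congr 1
      · rw [mu_eval hdy, if_pos rfl]
      · exact Finset.sum_congr rfl fun b hb => by rw [hmuy b hb]
    rw [e1, e2]
    have e3 : ((∑ a ∈ Nx, f a : ℤ) : ℝ) - ((∑ b ∈ Ny, f b : ℤ) : ℝ) = (Cp : ℝ) := by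
      rw [← Int.cast_sub, hfsum]
      push_cast
      ring
    push_cast at e3
    rw [← Finset.sum_mul, ← Finset.sum_mul]
    rw [hw1]
    push_cast
    rw [mul_zero, mul_zero, zero_add, zero_add, ← sub_mul, e3]
    ring

end Analysis

end ORC

/-- κ₀(x,y) = κ(x,y) − c/d for some c ∈ {0,1,2}. -/
theorem OllivierRicci.kappaZero_eq_kappa_sub_c {V : Type*} (G : SimpleGraph V)
    (hlf : G.LocallyFinite) (hconn : G.Connected) (x y : V) (hadj : G.Adj x y)
    (d : ℕ) (hdx : (G.neighborSet x).ncard = d) (hdy : (G.neighborSet y).ncard = d) :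
    ∃ c : ℝ, c ∈ ({0, 1, 2} : Set ℝ) ∧
      OllivierRicci.kappaAlpha G 0 x y = OllivierRicci.kappa G x y - c / d := by
  classical
  letI : ∀ v : V, Fintype (G.neighborSet v) := hlf
  have hdx' : (G.neighborFinset x).card = d := by
    rw [← hdx, Set.ncard_eq_toFinset_card']
    rfl
  have hdy' : (G.neighborFinset y).card = d := by
    rw [← hdy, Set.ncard_eq_toFinset_card']
    rfl
  have hyNx : y ∈ G.neighborFinset x := ORC.y_mem_Nx hadj
  have hd1 : 1 ≤ d := by
    rw [← hdx']
    exact Finset.card_pos.mpr ⟨y, hyNx⟩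
  have hdR : (0:ℝ) < (d:ℝ) := by exact_mod_cast hd1
  have hd0 : (d:ℝ) ≠ 0 := ne_of_gt hdR
  have hcard : (G.neighborFinset x).card = (G.neighborFinset y).card := by rw [hdx', hdy']
  set CN := ORC.Cmin G ((G.neighborFinset x).erase y) ((G.neighborFinset y).erase x) with hCN
  set Cp := ORC.Cmin G (G.neighborFinset x) (G.neighborFinset y) with hCp
  have hs1 : Cp ≤ CN + 1 := ORC.surgery1 hadj hcard
  have hs2 : CN ≤ Cp + 1 := ORC.surgery2 hconn hadj hcard
  have hdistxy : G.dist x y = 1 := SimpleGraph.dist_eq_one_iff_adj.mpr hadj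
  have hdistxyR : ((G.dist x y : ℕ) : ℝ) = 1 := by rw [hdistxy]; norm_num
  -- value of κ₀
  have hW0 := ORC.W1_mu_zero hconn hadj hdx' hdy'
  have hk0 : OllivierRicci.kappaAlpha G 0 x y = 1 - (Cp : ℝ)/d := by
    rw [OllivierRicci.kappaAlpha, hW0, hdistxyR, ← hCp]
    norm_num
  -- value of κ
  set k : ℝ := 1 + (1 - (CN:ℝ))/d with hk
  have htendsto : Filter.Tendsto (fun α => OllivierRicci.kappaAlpha G α x y / (1 - α))
      (nhdsWithin (1 : ℝ) (Set.Iio 1)) (nhds k) := by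
    apply Filter.Tendsto.congr' _ tendsto_const_nhds
    have hmem : Set.Ioo (1/((d:ℝ)+1)) 1 ∈ nhdsWithin (1 : ℝ) (Set.Iio 1) := by
      apply Ioo_mem_nhdsLT_of_mem
      constructor
      · rw [div_lt_one (by positivity)]
        linarith
      · exact le_refl 1
    filter_upwards [hmem] with α hα
    have hα1 : α < 1 := hα.2
    have hαγ : 1/((d:ℝ)+1) < α := hα.1
    have hαd : (1-α)/d ≤ α := by
      rw [div_le_iff₀ hdR]
      have := (div_lt_iff₀ (by positivity : (0:ℝ) < (d:ℝ)+1)).mp hαγ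
      nlinarith
    have hW := ORC.W1_mu_alpha hconn hadj hdx' hdy' (le_of_lt hα1) hαd
    rw [OllivierRicci.kappaAlpha, hW, hdistxyR, ← hCN]
    have h1α : (1:ℝ) - α ≠ 0 := by intro h; linarith
    rw [hk]
    field_simp
    ring
  have hkap : OllivierRicci.kappa G x y = k := by
    rw [OllivierRicci.kappa]
    exact htendsto.limUnder_eq
  refine ⟨(Cp:ℝ) + 1 - (CN:ℝ), ?_, ?_⟩
  · have hcases : Cp + 1 = CN ∨ Cp + 1 = CN + 1 ∨ Cp + 1 = CN + 2 := by omega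
    rcases hcases with h | h | h
    · have : (Cp:ℝ) + 1 - (CN:ℝ) = 0 := by
        have : ((Cp + 1 : ℕ) : ℝ) = (CN : ℝ) := by rw [h]
        push_cast at this
        linarith
      rw [this]
      exact Set.mem_insert _ _
    · have : (Cp:ℝ) + 1 - (CN:ℝ) = 1 := by
        have : ((Cp + 1 : ℕ) : ℝ) = ((CN + 1 : ℕ) : ℝ) := by rw [h]
        push_cast at this
        linarith
      rw [this]
      right; exact Set.mem_insert _ _
    · have : (Cp:ℝ) + 1 - (CN:ℝ) = 2 := by
        have : ((Cp + 1 : ℕ) : ℝ) = ((CN + 2 : ℕ) : ℝ) := by rw [h]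
        push_cast at this
        linarith
      rw [this]
      right; right; exact Set.mem_singleton _
  · rw [hk0, hkap, hk]
    field_simp
    ring
end
end

section
/- Let G be a locally finite graph and x ~ y adjacent vertices of equal degree d. If κ(x,y) > |△(x,y)|/d, then κ(x,y) ≠ κ₀(x,y). -/
open scoped Classical BigOperators

noncomputable section

private lemma OllivierRicci.kappaAlphaZero_le_aux {V : Type*} (G : SimpleGraph V)
    (hlf : G.LocallyFinite) (hconn : G.Connected) {x y : V} (hadj : G.Adj x y)
    {d : ℕ} (hdx : (G.neighborSet x).ncard = d) (hdy : (G.neighborSet y).ncard = d) :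
    OllivierRicci.kappaAlpha G 0 x y ≤ ((OllivierRicci.triangleSet G x y).ncard : ℝ) / d := by
  classical
  haveI : ∀ v : V, Fintype (G.neighborSet v) := hlf
  set nx := G.neighborFinset x with hnx
  set ny := G.neighborFinset y with hny
  have hdpos : 0 < d := by
    rw [← hdx]
    exact (Set.ncard_pos (Set.toFinite _)).2 ⟨y, hadj⟩
  have hd0 : (d : ℝ) ≠ 0 := Nat.cast_ne_zero.2 hdpos.ne'
  -- value of the measures
  have hval : ∀ (w : V), (G.neighborSet w).ncard = d → ∀ z : V,
      OllivierRicci.mu G 0 w z = if z ∈ G.neighborFinset w then 1 / (d : ℝ) else 0 := by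
    intro w hw z
    unfold OllivierRicci.mu
    by_cases hz : z = w
    · subst hz; simp [SimpleGraph.irrefl]
    · rw [if_neg hz]
      by_cases ha : G.Adj w z
      · rw [if_pos ha, if_pos (by simpa using ha), hw]
        norm_num
      · rw [if_neg ha, if_neg (by simpa using ha)]
  have hnn : ∀ (w : V), (G.neighborSet w).ncard = d → ∀ z : V,
      0 ≤ OllivierRicci.mu G 0 w z := by
    intro w hw z
    rw [hval w hw z]
    split <;> positivity
  have hcard : ∀ w : V, (G.neighborSet w).ncard = d → (G.neighborFinset w).card = d := by
    intro w hw
    rw [SimpleGraph.neighborFinset, ← Set.ncard_eq_toFinset_card', hw]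
  -- the measures sum to 1
  have hsum : ∀ (w : V), (G.neighborSet w).ncard = d →
      HasSum (OllivierRicci.mu G 0 w) 1 := by
    intro w hw
    have h0 : ∀ z ∉ G.neighborFinset w, OllivierRicci.mu G 0 w z = 0 := fun z hz => by
      rw [hval w hw z, if_neg hz]
    have hs : ∑ z ∈ G.neighborFinset w, OllivierRicci.mu G 0 w z = 1 := by
      rw [Finset.sum_congr rfl (fun z hz => by rw [hval w hw z, if_pos hz]),
        Finset.sum_const, hcard w hw, nsmul_eq_mul, mul_one_div, div_self hd0]
    have := hasSum_sum_of_ne_finset_zero (L := SummationFilter.unconditional V) h0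
    rwa [hs] at this
  set T : ℝ := ((OllivierRicci.triangleSet G x y).ncard : ℝ) with hT
  have hTd : T = ((nx ∩ ny).card : ℝ) := by
    rw [hT]
    congr 1
    rw [OllivierRicci.triangleSet]
    have hset : G.neighborSet x ∩ G.neighborSet y = ((nx ∩ ny : Finset V) : Set V) := by
      ext z; simp [hnx, hny]
    rw [hset, Set.ncard_coe_finset]
  -- lower bound for the cost of every plan
  have key : ∀ c ∈ {c : ℝ | ∃ π : V → V → ℝ,
      OllivierRicci.IsPlan (OllivierRicci.mu G 0 x) (OllivierRicci.mu G 0 y) π ∧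
        OllivierRicci.cost G π = c}, 1 - T / d ≤ c := by
    rintro c ⟨π, ⟨hpos, hrow, hcol⟩, rfl⟩
    have hπx : ∀ u v, π u v ≤ OllivierRicci.mu G 0 x u :=
      fun u v => le_hasSum (hrow u) v (fun v' _ => hpos u v')
    have hπy : ∀ u v, π u v ≤ OllivierRicci.mu G 0 y v :=
      fun u v => le_hasSum (hcol v) u (fun u' _ => hpos u' v)
    have hzx : ∀ u v : V, u ∉ nx → π u v = 0 := by
      intro u v hu
      have h := hπx u v
      rw [hval x hdx u, if_neg hu] at h
      exact le_antisymm h (hpos u v)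
    have hzy : ∀ u v : V, v ∉ ny → π u v = 0 := by
      intro u v hv
      have h := hπy u v
      rw [hval y hdy v, if_neg hv] at h
      exact le_antisymm h (hpos u v)
    have hz : ∀ p : V × V, p ∉ nx ×ˢ ny → π p.1 p.2 = 0 := by
      rintro ⟨u, v⟩ hp
      rcases not_and_or.1 (by simpa [Finset.mem_product] using hp) with h1 | h1
      · exact hzx u v h1
      · exact hzy u v h1
    have hcost : OllivierRicci.cost G π
        = ∑ p ∈ nx ×ˢ ny, (G.dist p.1 p.2 : ℝ) * π p.1 p.2 := by
      apply tsum_eq_sum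
      intro p hp
      rw [hz p hp, mul_zero]
    have hrowsum : ∀ u, ∑ v ∈ ny, π u v = OllivierRicci.mu G 0 x u := by
      intro u
      have h0 : ∀ v ∉ ny, π u v = 0 := fun v hv => hzy u v hv
      exact (hasSum_sum_of_ne_finset_zero h0).unique (hrow u)
    have htot : ∑ p ∈ nx ×ˢ ny, π p.1 p.2 = 1 := by
      rw [Finset.sum_product, Finset.sum_congr rfl (fun u _ => hrowsum u),
        Finset.sum_congr rfl (fun u hu => by rw [hval x hdx u, if_pos hu]),
        Finset.sum_const, hcard x hdx, nsmul_eq_mul, mul_one_div, div_self hd0]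
    have hdiag : ∑ p ∈ nx ×ˢ ny, (if p.1 = p.2 then π p.1 p.2 else 0) ≤ T / d := by
      have h1 : ∑ p ∈ nx ×ˢ ny, (if p.1 = p.2 then π p.1 p.2 else 0)
          = ∑ u ∈ nx ∩ ny, π u u := by
        rw [Finset.sum_product]
        simp_rw [Finset.sum_ite_eq]
        rw [Finset.sum_ite_mem]
      rw [h1, hTd]
      calc ∑ u ∈ nx ∩ ny, π u u ≤ ∑ _u ∈ nx ∩ ny, 1 / (d : ℝ) := by
            apply Finset.sum_le_sum
            intro u hu
            have h := hπx u u
            rwa [hval x hdx u, if_pos (Finset.mem_of_mem_inter_left hu)] at h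
        _ = ((nx ∩ ny).card : ℝ) / d := by
            rw [Finset.sum_const, nsmul_eq_mul, mul_one_div]
    have hpt : ∀ p ∈ nx ×ˢ ny,
        π p.1 p.2 - (if p.1 = p.2 then π p.1 p.2 else 0)
          ≤ (G.dist p.1 p.2 : ℝ) * π p.1 p.2 := by
      intro p _
      by_cases hpe : p.1 = p.2
      · rw [if_pos hpe, sub_self]
        exact mul_nonneg (by positivity) (hpos p.1 p.2)
      · rw [if_neg hpe, sub_zero]
        have h1 : (1 : ℝ) ≤ (G.dist p.1 p.2 : ℝ) :=
          Nat.one_le_cast.2 (hconn.pos_dist_of_ne hpe)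
        nlinarith [hpos p.1 p.2]
    have hle := Finset.sum_le_sum hpt
    rw [Finset.sum_sub_distrib, htot] at hle
    rw [hcost]
    linarith
  have hW1 : 1 - T / d ≤ OllivierRicci.W1 G (OllivierRicci.mu G 0 x) (OllivierRicci.mu G 0 y) := by
    apply le_csInf
    · refine ⟨OllivierRicci.cost G (fun u v => OllivierRicci.mu G 0 x u * OllivierRicci.mu G 0 y v),
        fun u v => OllivierRicci.mu G 0 x u * OllivierRicci.mu G 0 y v, ⟨?_, ?_, ?_⟩, rfl⟩
      · intro u v
        exact mul_nonneg (hnn x hdx u) (hnn y hdy v)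
      · intro u
        simpa using (hsum y hdy).mul_left (OllivierRicci.mu G 0 x u)
      · intro v
        simpa using (hsum x hdx).mul_right (OllivierRicci.mu G 0 y v)
    · exact key
  have hdist : (G.dist x y : ℝ) = 1 := by
    exact_mod_cast SimpleGraph.dist_eq_one_iff_adj.2 hadj
  rw [OllivierRicci.kappaAlpha, hdist, div_one]
  linarith

/-- large κ forces κ ≠ κ₀. -/
theorem OllivierRicci.kappa_ne_kappaZero_of_large {V : Type*} (G : SimpleGraph V)
    (hlf : G.LocallyFinite) (hconn : G.Connected) (x y : V) (hadj : G.Adj x y)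
    (d : ℕ) (hdx : (G.neighborSet x).ncard = d) (hdy : (G.neighborSet y).ncard = d)
    (h : OllivierRicci.kappa G x y > ((OllivierRicci.triangleSet G x y).ncard : ℝ) / d) :
    OllivierRicci.kappa G x y ≠ OllivierRicci.kappaAlpha G 0 x y :=
  (ne_of_lt (lt_of_le_of_lt
    (OllivierRicci.kappaAlphaZero_le_aux G hlf hconn hadj hdx hdy) h)).symm
end
end

section
/- Let G be a locally finite graph and x ~ y adjacent vertices of equal degree d with no common neighbors. Then κ₀(x,y) = 0 if and only if there exists a perfect matching between S₁(x) and S₁(y), i.e. a bijection φ : S₁(x) → S₁(y) with d(z, φ(z)) = 1 for all z ∈ S₁(x). -/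
open scoped Classical BigOperators

noncomputable section

namespace OllivierRicci

variable {V : Type*}

lemma mu_zero_apply (G : SimpleGraph V) (x z : V) :
    mu G 0 x z = if G.Adj x z then 1 / ((G.neighborSet x).ncard : ℝ) else 0 := by
  by_cases h : z = x
  · subst h; simp [mu, G.irrefl]
  · simp [mu, h]

lemma plan_cost_ge (G : SimpleGraph V)
    (hlf : G.LocallyFinite) (hconn : G.Connected) {x y : V}
    (hadj : G.Adj x y) {d : ℕ}
    (hdx : (G.neighborSet x).ncard = d) (hdy : (G.neighborSet y).ncard = d)
    (htri : triangleSet G x y = ∅)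
    {π : V → V → ℝ} (hπ : IsPlan (mu G 0 x) (mu G 0 y) π)
    (A B : Finset V)
    (hA : ∀ z ∈ A, z ∈ G.neighborSet x) (hB : ∀ w ∈ B, w ∈ G.neighborSet y)
    (hAB : ∀ z ∈ A, ∀ w, G.Adj z w → w ∈ G.neighborSet y → w ∈ B) :
    1 + ((A.card : ℝ) - B.card) / d ≤ cost G π := by
  letI : ∀ v, Fintype (G.neighborSet v) := hlf
  obtain ⟨hnn, hrow, hcol⟩ := hπ
  set sx : Finset V := (G.neighborSet x).toFinset with hsx
  set sy : Finset V := (G.neighborSet y).toFinset with hsy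
  have hmemx : ∀ z, z ∈ sx ↔ G.Adj x z := by
    intro z; simp [hsx, Set.mem_toFinset]
  have hmemy : ∀ w, w ∈ sy ↔ G.Adj y w := by
    intro w; simp [hsy, Set.mem_toFinset]
  have hcardx : sx.card = d := by rw [← hdx, Set.ncard_eq_toFinset_card']
  have hcardy : sy.card = d := by rw [← hdy, Set.ncard_eq_toFinset_card']
  have hd0 : 0 < d := by
    rw [← hdx]
    exact (Set.ncard_pos (Set.toFinite _)).mpr ⟨y, hadj⟩
  have hdR : (0:ℝ) < d := by exact_mod_cast hd0
  have hmux : ∀ z ∈ sx, mu G 0 x z = 1 / (d : ℝ) := by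
    intro z hz; rw [mu_zero_apply, if_pos ((hmemx z).mp hz), hdx]
  have hmux0 : ∀ z, z ∉ sx → mu G 0 x z = 0 := by
    intro z hz; rw [mu_zero_apply, if_neg (fun h => hz ((hmemx z).mpr h))]
  have hmuy : ∀ w ∈ sy, mu G 0 y w = 1 / (d : ℝ) := by
    intro w hw; rw [mu_zero_apply, if_pos ((hmemy w).mp hw), hdy]
  have hmuy0 : ∀ w, w ∉ sy → mu G 0 y w = 0 := by
    intro w hw; rw [mu_zero_apply, if_neg (fun h => hw ((hmemy w).mpr h))]
  have hz0 : ∀ z w, z ∉ sx → π z w = 0 := by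
    intro z w hz
    have h1 : π z w ≤ mu G 0 x z := le_hasSum (hrow z) w (fun j _ => hnn z j)
    rw [hmux0 z hz] at h1
    exact le_antisymm h1 (hnn z w)
  have hw0 : ∀ z w, w ∉ sy → π z w = 0 := by
    intro z w hw
    have h1 : π z w ≤ mu G 0 y w := le_hasSum (hcol w) z (fun j _ => hnn j w)
    rw [hmuy0 w hw] at h1
    exact le_antisymm h1 (hnn z w)
  have hrowsum : ∀ z, ∑ w ∈ sy, π z w = mu G 0 x z := by
    intro z
    exact (hasSum_sum_of_ne_finset_zero (fun w hw => hw0 z w hw)).unique (hrow z)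
  have hcolsum : ∀ w, ∑ z ∈ sx, π z w = mu G 0 y w := by
    intro w
    exact (hasSum_sum_of_ne_finset_zero (fun z hz => hz0 z w hz)).unique (hcol w)
  have htotal : ∑ z ∈ sx, ∑ w ∈ sy, π z w = 1 := by
    rw [Finset.sum_congr rfl (fun z hz => (hrowsum z).trans (hmux z hz))]
    rw [Finset.sum_const, hcardx, nsmul_eq_mul]
    field_simp
  have hA' : A ⊆ sx := by
    intro z hz; rw [hmemx]; exact hA z hz
  have hB' : B ⊆ sy := by
    intro w hw; rw [hmemy]; exact hB w hw
  have hcost : cost G π = ∑ p ∈ sx ×ˢ sy, (G.dist p.1 p.2 : ℝ) * π p.1 p.2 := by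
    apply tsum_eq_sum
    intro p hp
    rw [Finset.mem_product] at hp
    push_neg at hp
    by_cases h1 : p.1 ∈ sx
    · rw [hw0 p.1 p.2 (hp h1), mul_zero]
    · rw [hz0 p.1 p.2 h1, mul_zero]
  have hdist1 : ∀ z ∈ sx, ∀ w ∈ sy, 1 ≤ G.dist z w := by
    intro z hz w hw
    have hne : z ≠ w := by
      intro h
      have : w ∈ triangleSet G x y := ⟨h ▸ (hmemx z).mp hz, (hmemy w).mp hw⟩
      rw [htri] at this
      exact this
    exact hconn.pos_dist_of_ne hne
  have hdist2 : ∀ z ∈ A, ∀ w ∈ sy, w ∉ B → 2 ≤ G.dist z w := by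
    intro z hz w hw hwB
    have h1 : 1 ≤ G.dist z w := hdist1 z (hA' hz) w hw
    have h2 : G.dist z w ≠ 1 := by
      intro h
      have hadj' : G.Adj z w := SimpleGraph.dist_eq_one_iff_adj.mp h
      exact hwB (hAB z hz w hadj' ((hmemy w).mp hw))
    omega
  -- split
  have hsub : A ×ˢ (sy \ B) ⊆ sx ×ˢ sy := by
    intro p hp
    rw [Finset.mem_product] at hp ⊢
    exact ⟨hA' hp.1, (Finset.mem_sdiff.mp hp.2).1⟩
  have hsplit := Finset.sum_sdiff (f := fun p : V × V => (G.dist p.1 p.2 : ℝ) * π p.1 p.2) hsub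
  have hsplit2 := Finset.sum_sdiff (f := fun p : V × V => π p.1 p.2) hsub
  have htotal' : ∑ p ∈ sx ×ˢ sy, π p.1 p.2 = 1 := by
    rw [Finset.sum_product]; exact htotal
  have hb1 : ∑ p ∈ (sx ×ˢ sy) \ (A ×ˢ (sy \ B)), π p.1 p.2
      ≤ ∑ p ∈ (sx ×ˢ sy) \ (A ×ˢ (sy \ B)), (G.dist p.1 p.2 : ℝ) * π p.1 p.2 := by
    apply Finset.sum_le_sum
    intro p hp
    have hp' := Finset.mem_sdiff.mp hp |>.1
    rw [Finset.mem_product] at hp'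
    have h1 : (1:ℝ) ≤ (G.dist p.1 p.2 : ℝ) := by
      exact_mod_cast hdist1 p.1 hp'.1 p.2 hp'.2
    nlinarith [hnn p.1 p.2]
  have hb2 : ∑ p ∈ A ×ˢ (sy \ B), (2 * π p.1 p.2)
      ≤ ∑ p ∈ A ×ˢ (sy \ B), (G.dist p.1 p.2 : ℝ) * π p.1 p.2 := by
    apply Finset.sum_le_sum
    intro p hp
    rw [Finset.mem_product, Finset.mem_sdiff] at hp
    have h2 : (2:ℝ) ≤ (G.dist p.1 p.2 : ℝ) := by
      exact_mod_cast hdist2 p.1 hp.1 p.2 hp.2.1 hp.2.2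
    nlinarith [hnn p.1 p.2]
  set E := ∑ p ∈ A ×ˢ (sy \ B), π p.1 p.2 with hE
  have hcostge : 1 + E ≤ cost G π := by
    rw [hcost, ← hsplit]
    have : ∑ p ∈ A ×ˢ (sy \ B), (2 * π p.1 p.2) = 2 * E := by
      rw [hE, Finset.mul_sum]
    nlinarith [hb1, hb2, hsplit2, htotal']
  -- now bound E from below
  have hEeq : E = ∑ z ∈ A, (∑ w ∈ sy, π z w - ∑ w ∈ B, π z w) := by
    rw [hE, Finset.sum_product]
    apply Finset.sum_congr rfl
    intro z _
    rw [eq_sub_iff_add_eq]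
    exact Finset.sum_sdiff hB'
  have hs1 : ∑ z ∈ A, ∑ w ∈ sy, π z w = (A.card : ℝ) / d := by
    rw [Finset.sum_congr rfl (fun z hz => (hrowsum z).trans (hmux z (hA' hz)))]
    rw [Finset.sum_const, nsmul_eq_mul]
    ring
  have hs2 : ∑ z ∈ A, ∑ w ∈ B, π z w ≤ (B.card : ℝ) / d := by
    rw [Finset.sum_comm]
    have : ∑ w ∈ B, ∑ z ∈ A, π z w ≤ ∑ w ∈ B, ∑ z ∈ sx, π z w := by
      apply Finset.sum_le_sum
      intro w _
      exact Finset.sum_le_sum_of_subset_of_nonneg hA' (fun z _ _ => hnn z w)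
    refine this.trans (le_of_eq ?_)
    rw [Finset.sum_congr rfl (fun w hw => (hcolsum w).trans (hmuy w (hB' hw)))]
    rw [Finset.sum_const, nsmul_eq_mul]
    ring
  have hEge : ((A.card : ℝ) - B.card) / d ≤ E := by
    rw [hEeq, Finset.sum_sub_distrib, hs1, sub_div]
    linarith [hs2]
  linarith [hcostge, hEge]


end OllivierRicci
/-- for a triangle-free edge, κ₀ = 0 iff there is a perfect matching
between the neighborhoods. -/
theorem OllivierRicci.kappaZero_eq_zero_iff_perfect_matching {V : Type*}
    (G : SimpleGraph V) (hlf : G.LocallyFinite) (hconn : G.Connected) (x y : V)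
    (hadj : G.Adj x y) (d : ℕ)
    (hdx : (G.neighborSet x).ncard = d) (hdy : (G.neighborSet y).ncard = d)
    (htri : OllivierRicci.triangleSet G x y = ∅) :
    OllivierRicci.kappaAlpha G 0 x y = 0 ↔
      ∃ φ : V → V, Set.BijOn φ (G.neighborSet x) (G.neighborSet y) ∧
        ∀ z ∈ G.neighborSet x, G.dist z (φ z) = 1 := by

  letI : ∀ v, Fintype (G.neighborSet v) := hlf
  have hd0 : 0 < d := by
    rw [← hdx]; exact (Set.ncard_pos (Set.toFinite _)).mpr ⟨y, hadj⟩
  have hdR : (0:ℝ) < d := by exact_mod_cast hd0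
  have hxy1 : G.dist x y = 1 := SimpleGraph.dist_eq_one_iff_adj.mpr hadj
  have hkiff : kappaAlpha G 0 x y = 0 ↔ W1 G (mu G 0 x) (mu G 0 y) = 1 := by
    unfold kappaAlpha
    rw [hxy1, Nat.cast_one, div_one]
    constructor <;> intro h <;> linarith
  set S : Set ℝ := {c : ℝ | ∃ π : V → V → ℝ, IsPlan (mu G 0 x) (mu G 0 y) π ∧ cost G π = c}
    with hS
  have hW1S : W1 G (mu G 0 x) (mu G 0 y) = sInf S := rfl
  constructor
  · intro hk
    have hW : W1 G (mu G 0 x) (mu G 0 y) = 1 := hkiff.mp hk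
    set sy : Finset V := (G.neighborSet y).toFinset with hsy
    set t : (G.neighborSet x) → Finset V := fun z => sy.filter (fun w => G.Adj ↑z w) with ht
    have hall : ∀ s : Finset (G.neighborSet x), s.card ≤ (s.biUnion t).card := by
      by_contra hcon
      push_neg at hcon
      obtain ⟨s, hs⟩ := hcon
      set A : Finset V := s.image Subtype.val with hAdef
      set B : Finset V := s.biUnion t with hBdef
      have hAcard : A.card = s.card := Finset.card_image_of_injective s Subtype.val_injective
      have hA : ∀ z ∈ A, z ∈ G.neighborSet x := by
        intro z hz
        obtain ⟨ζ, _, rfl⟩ := Finset.mem_image.mp hz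
        exact ζ.2
      have hB : ∀ w ∈ B, w ∈ G.neighborSet y := by
        intro w hw
        obtain ⟨ζ, _, hw'⟩ := Finset.mem_biUnion.mp hw
        exact Set.mem_toFinset.mp (Finset.mem_filter.mp hw').1
      have hAB : ∀ z ∈ A, ∀ w, G.Adj z w → w ∈ G.neighborSet y → w ∈ B := by
        intro z hz w hadj' hw
        obtain ⟨ζ, hζ, rfl⟩ := Finset.mem_image.mp hz
        exact Finset.mem_biUnion.mpr
          ⟨ζ, hζ, Finset.mem_filter.mpr ⟨Set.mem_toFinset.mpr hw, hadj'⟩⟩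
      have hlb : ∀ c ∈ S, 1 + 1/(d:ℝ) ≤ c := by
        rintro c ⟨π, hπ, rfl⟩
        have h1 := plan_cost_ge G hlf hconn hadj hdx hdy htri hπ A B hA hB hAB
        have h3 : B.card + 1 ≤ A.card := by rw [hAcard]; omega
        have h2 : (1:ℝ) ≤ (A.card:ℝ) - B.card := by
          have : (B.card:ℝ) + 1 ≤ A.card := by exact_mod_cast h3
          linarith
        have h4 : 1/(d:ℝ) ≤ ((A.card:ℝ) - B.card)/d := by gcongr
        linarith
      rcases Set.eq_empty_or_nonempty S with hset | hset
      · rw [hW1S, hset, Real.sInf_empty] at hW; norm_num at hW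
      · have h5 := le_csInf hset hlb
        rw [← hW1S, hW] at h5
        have : 0 < 1/(d:ℝ) := by positivity
        linarith
    obtain ⟨f, hfinj, hft⟩ := (Finset.all_card_le_biUnion_card_iff_exists_injective t).mp hall
    have hfy : ∀ z, f z ∈ G.neighborSet y ∧ G.Adj (↑z) (f z) := by
      intro z
      have := Finset.mem_filter.mp (hft z)
      exact ⟨Set.mem_toFinset.mp this.1, this.2⟩
    set φ : V → V := fun v => if h : v ∈ G.neighborSet x then f ⟨v, h⟩ else v with hφdef
    have hφ : ∀ z (h : z ∈ G.neighborSet x), φ z = f ⟨z, h⟩ := fun z h => dif_pos h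
    have hmaps : Set.MapsTo φ (G.neighborSet x) (G.neighborSet y) := by
      intro z hz
      rw [hφ z hz]
      exact (hfy ⟨z, hz⟩).1
    have hinj : Set.InjOn φ (G.neighborSet x) := by
      intro a ha b hb hab
      rw [hφ a ha, hφ b hb] at hab
      exact congrArg Subtype.val (hfinj hab)
    have himg : φ '' (G.neighborSet x) = G.neighborSet y := by
      apply Set.eq_of_subset_of_ncard_le (hmaps.image_subset)
      rw [Set.ncard_image_of_injOn hinj, hdx, hdy]
    refine ⟨φ, ⟨hmaps, hinj, ?_⟩, ?_⟩
    · rw [Set.SurjOn, himg]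
    · intro z hz
      rw [hφ z hz]
      exact SimpleGraph.dist_eq_one_iff_adj.mpr (hfy ⟨z, hz⟩).2
  · rintro ⟨φ, hbij, hdist⟩
    set π : V → V → ℝ := fun z w => if z ∈ G.neighborSet x ∧ w = φ z then 1/(d:ℝ) else 0
      with hπdef
    have hnn : ∀ z w, 0 ≤ π z w := by
      intro z w
      rw [hπdef]
      dsimp only
      split_ifs
      · positivity
      · exact le_refl 0
    have hrow : ∀ z, HasSum (fun w => π z w) (mu G 0 x z) := by
      intro z
      by_cases hz : z ∈ G.neighborSet x
      · have he : (fun w => π z w) = (fun w => if w = φ z then 1/(d:ℝ) else 0) := by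
          funext w
          rw [hπdef]
          simp [hz]
        have hmu : mu G 0 x z = 1/(d:ℝ) := by
          rw [mu_zero_apply, if_pos (show G.Adj x z from hz), hdx]
        rw [he, hmu]
        exact hasSum_ite_eq (φ z) (1/(d:ℝ))
      · have he : (fun w => π z w) = (fun _ => (0:ℝ)) := by
          funext w
          rw [hπdef]
          simp [hz]
        have hmu : mu G 0 x z = 0 := by
          rw [mu_zero_apply, if_neg (show ¬ G.Adj x z from fun h => hz h)]
        rw [he, hmu]
        exact hasSum_zero
    have hcol : ∀ w, HasSum (fun z => π z w) (mu G 0 y w) := by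
      intro w
      by_cases hw : w ∈ G.neighborSet y
      · obtain ⟨z₀, hz₀, hz₀w⟩ := hbij.2.2 hw
        have he : (fun z => π z w) = (fun z => if z = z₀ then 1/(d:ℝ) else 0) := by
          funext z
          by_cases h : z = z₀
          · subst h
            rw [hπdef]
            simp [hz₀, hz₀w.symm]
          · rw [if_neg h, hπdef]
            dsimp only
            apply if_neg
            rintro ⟨hzx, hwz⟩
            exact h (hbij.2.1 hzx hz₀ (by rw [← hwz, hz₀w]))
        have hmu : mu G 0 y w = 1/(d:ℝ) := by
          rw [mu_zero_apply, if_pos (show G.Adj y w from hw), hdy]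
        rw [he, hmu]
        exact hasSum_ite_eq z₀ (1/(d:ℝ))
      · have he : (fun z => π z w) = (fun _ => (0:ℝ)) := by
          funext z
          rw [hπdef]
          dsimp only
          apply if_neg
          rintro ⟨hzx, hwz⟩
          exact hw (hwz ▸ hbij.1 hzx)
        have hmu : mu G 0 y w = 0 := by
          rw [mu_zero_apply, if_neg (show ¬ G.Adj y w from fun h => hw h)]
        rw [he, hmu]
        exact hasSum_zero
    have hplan : IsPlan (mu G 0 x) (mu G 0 y) π := ⟨hnn, hrow, hcol⟩
    set sx : Finset V := (G.neighborSet x).toFinset with hsx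
    have hcardx : sx.card = d := by rw [← hdx, Set.ncard_eq_toFinset_card']
    have hcost : cost G π = 1 := by
      have h1 : cost G π
          = ∑ p ∈ sx.image (fun z => (z, φ z)), (G.dist p.1 p.2 : ℝ) * π p.1 p.2 := by
        apply tsum_eq_sum
        intro p hp
        have hπ0 : π p.1 p.2 = 0 := by
          rw [hπdef]
          dsimp only
          apply if_neg
          rintro ⟨hzx, hwz⟩
          exact hp (Finset.mem_image.mpr ⟨p.1, Set.mem_toFinset.mpr hzx,
            (Prod.ext rfl hwz.symm)⟩)
        rw [hπ0, mul_zero]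
      rw [h1, Finset.sum_image (fun z1 _ z2 _ h => congrArg Prod.fst h)]
      have h2 : ∀ z ∈ sx, (G.dist z (φ z) : ℝ) * π z (φ z) = 1/(d:ℝ) := by
        intro z hz
        have hz' : z ∈ G.neighborSet x := Set.mem_toFinset.mp hz
        have hd1 : G.dist z (φ z) = 1 := hdist z hz'
        have hπ1 : π z (φ z) = 1/(d:ℝ) := by
          rw [hπdef]; exact if_pos ⟨hz', rfl⟩
        rw [hd1, hπ1]
        norm_num
      rw [Finset.sum_congr rfl h2, Finset.sum_const, hcardx, nsmul_eq_mul]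
      field_simp
    have h1mem : (1:ℝ) ∈ S := ⟨π, hplan, hcost⟩
    have hlb : ∀ c ∈ S, (1:ℝ) ≤ c := by
      rintro c ⟨π', hπ', rfl⟩
      have h1 := plan_cost_ge G hlf hconn hadj hdx hdy htri hπ' ∅ ∅
        (by simp) (by simp) (by simp)
      simpa using h1
    have hW : W1 G (mu G 0 x) (mu G 0 y) = 1 := by
      rw [hW1S]
      exact le_antisymm (csInf_le ⟨1, hlb⟩ h1mem) (le_csInf ⟨1, h1mem⟩ hlb)
    exact hkiff.mpr hW
end
end
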